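/- arXiv:math/0505570 — 6 statements merged into one kernel-verified Lean document; each statement's English description precedes it below -/
import Mathlib

section
/- Let $E$ be the exterior algebra on a vector space $V$ of dimension $v$ over a field $k$. Let $y_0, y_1, \ldots, y_j$ be linearly independent elements of $V$ and set $y_J = y_1 \wedge \cdots \wedge y_j$. Let $M$ be a homogeneous element of $E$ such that $M \wedge y_J$ has degree at most $v - 2$. If for every $y \in V$ the element $M \wedge y_J \wedge y$ has $y_0$ as a factor (i.e., can be written as $M' \wedge y_0$ for some $M'$ possibly depending on $y$), then $M \wedge y_J = N \wedge y_0 \wedge y_J$ for some homogeneous element $N \in E$. -/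
open ExteriorAlgebra

/-- A linearly independent family admits a functional dual to its last element. -/
lemma exists_dual_fun {k V : Type} [Field k] [AddCommGroup V] [Module k V]
    {n : ℕ} {y : Fin (n + 1) → V} (hy : LinearIndependent k y) :
    ∃ f : V →ₗ[k] k, f (y (Fin.last n)) = 1 ∧ ∀ i : Fin n, f (y i.castSucc) = 0 := by
  set B := Module.Basis.span hy
  obtain ⟨g, hg⟩ := LinearMap.exists_extend (B.coord (Fin.last n))
  have key : ∀ i : Fin (n + 1), g (y i) = if i = Fin.last n then 1 else 0 := by
    intro i
    have hmem : y i ∈ Submodule.span k (Set.range y) :=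
      Submodule.subset_span (Set.mem_range_self i)
    have h1 : g (y i) = B.repr ⟨y i, hmem⟩ (Fin.last n) := by
      simpa using LinearMap.congr_fun hg ⟨y i, hmem⟩
    have h2 : (⟨y i, hmem⟩ : Submodule.span k (Set.range y)) = B i := by
      ext; simp [B, Module.Basis.span_apply]
    rw [h1, h2, Module.Basis.repr_self]
    simp [Finsupp.single_apply, eq_comm]
  refine ⟨g, by simp [key], fun i => ?_⟩
  rw [key]
  simp [Fin.ext_iff, (Fin.castSucc_lt_last i).ne]

/-- If `z` is annihilated by right multiplication with each member of a linearly
independent family, then `z` is right-divisible by the product of the family. -/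
lemma divis {k V : Type} [Field k] [AddCommGroup V] [Module k V] :
    ∀ (n : ℕ) (y : Fin n → V), LinearIndependent k y →
      ∀ z : ExteriorAlgebra k V, (∀ i, z * ExteriorAlgebra.ι k (y i) = 0) →
        ∃ w : ExteriorAlgebra k V,
          z = w * (List.ofFn fun i => ExteriorAlgebra.ι k (y i)).prod := by
  intro n
  induction n with
  | zero => intro y _ z _; exact ⟨z, by simp⟩
  | succ n ih =>
    intro y hy z hz
    obtain ⟨f, hf1, hf0⟩ := exists_dual_fun hy
    set z₁ : ExteriorAlgebra k V := CliffordAlgebra.contractRight z f with hz₁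
    have key : ∀ v : V, z * ExteriorAlgebra.ι k v = 0 →
        f v • z - z₁ * ExteriorAlgebra.ι k v = 0 := by
      intro v hv
      have := CliffordAlgebra.contractRight_mul_ι (Q := (0 : QuadraticForm k V)) (d := f) v z
      rw [hv] at this
      simpa using this.symm
    have hlast : z = z₁ * ExteriorAlgebra.ι k (y (Fin.last n)) := by
      have := key _ (hz (Fin.last n))
      rw [hf1, one_smul, sub_eq_zero] at this
      exact this
    have hz₁i : ∀ i : Fin n, z₁ * ExteriorAlgebra.ι k (y i.castSucc) = 0 := by
      intro i
      have := key _ (hz i.castSucc)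
      rw [hf0 i, zero_smul, zero_sub, neg_eq_zero] at this
      exact this
    obtain ⟨w, hw⟩ := ih (fun i => y i.castSucc)
      (hy.comp _ (Fin.castSucc_injective n)) z₁ hz₁i
    refine ⟨w, ?_⟩
    rw [hlast, hw, List.ofFn_succ' (fun i => ExteriorAlgebra.ι k (y i)), List.concat_eq_append,
      List.prod_append, List.prod_cons, List.prod_nil, mul_one, mul_assoc]

/-- A homogeneous element of degree `< dim V` annihilated by every vector is zero. -/
lemma homog_zero {k V : Type} [Field k] [AddCommGroup V] [Module k V] [FiniteDimensional k V]
    {d : ℕ} (hd : d < Module.finrank k V) (z : ExteriorAlgebra k V) (hzmem : z ∈ ⋀[k]^d V)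
    (hz : ∀ w : V, z * ExteriorAlgebra.ι k w = 0) : z = 0 := by
  set v := Module.finrank k V
  set b := Module.finBasis k V
  obtain ⟨w, hw⟩ := divis v b b.linearIndependent z (fun i => hz (b i))
  have hT : (List.ofFn fun i => ExteriorAlgebra.ι k (b i)).prod ∈ ⋀[k]^v V := by
    rw [← ExteriorAlgebra.ιMulti_apply]
    exact ExteriorAlgebra.ιMulti_range k v (Set.mem_range_self _)
  have h0 := DirectSum.decompose_of_mem_same (fun i : ℕ => ⋀[k]^i V) hzmem
  rw [hw] at h0
  rw [DirectSum.coe_decompose_mul_of_right_mem_of_not_le (𝒜 := fun i : ℕ => ⋀[k]^i V) hT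
    (show ¬ v ≤ d by omega)] at h0
  rw [hw, ← h0]

/-- Let `E` be the exterior algebra on a vector space `V` of dimension `v`
over a field `k`.  Let `y₀, y₁, …, y_j` be linearly independent elements of `V` and set
`y_J = y₁ ∧ ⋯ ∧ y_j`.  Let `M` be a homogeneous element of `E` (say of degree `m`) such that
`M ∧ y_J` has degree at most `v - 2` (i.e. `m + j ≤ v - 2`).  If for every `y ∈ V` the
element `M ∧ y_J ∧ y` has `y₀` as a factor (i.e. can be written `M' ∧ y₀`), then
`M ∧ y_J = N ∧ y₀ ∧ y_J` for some homogeneous element `N ∈ E`. -/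
theorem stmt1 (k V : Type) [Field k] [AddCommGroup V] [Module k V] [FiniteDimensional k V]
    (j m : ℕ) (y : Fin (j + 1) → V) (hy : LinearIndependent k y)
    (M : ExteriorAlgebra k V) (hM : M ∈ ⋀[k]^m V)
    (hdeg : m + j + 2 ≤ Module.finrank k V)
    (hfac : ∀ w : V, ∃ M' : ExteriorAlgebra k V,
        M * ExteriorAlgebra.ιMulti k j (fun i : Fin j => y i.succ) * ExteriorAlgebra.ι k w =
          M' * ExteriorAlgebra.ι k (y 0)) :
    ∃ (d : ℕ) (N : ExteriorAlgebra k V), N ∈ ⋀[k]^d V ∧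
      M * ExteriorAlgebra.ιMulti k j (fun i : Fin j => y i.succ) =
        N * ExteriorAlgebra.ι k (y 0) *
          ExteriorAlgebra.ιMulti k j (fun i : Fin j => y i.succ) := by
  set yJ := ExteriorAlgebra.ιMulti k j (fun i : Fin j => y i.succ) with hyJdef
  set X := M * yJ with hXdef
  have hyJmem : yJ ∈ ⋀[k]^j V := ExteriorAlgebra.ιMulti_range k j (Set.mem_range_self _)
  have hXmem : X ∈ ⋀[k]^(m + j) V := SetLike.mul_mem_graded hM hyJmem
  have hι0 : ExteriorAlgebra.ι k (y 0) ∈ ⋀[k]^1 V := by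
    simp only [pow_one]
    exact LinearMap.mem_range_self (ExteriorAlgebra.ι k) (y 0)
  -- X * ι (y 0) = 0
  have hZ : X * ExteriorAlgebra.ι k (y 0) = 0 := by
    refine homog_zero (d := m + j + 1) (by omega) _
      (SetLike.mul_mem_graded hXmem hι0) (fun w => ?_)
    obtain ⟨M', hM'⟩ := hfac w
    have h1 : X * ExteriorAlgebra.ι k w * ExteriorAlgebra.ι k (y 0) = 0 := by
      rw [hXdef, hM', mul_assoc, ExteriorAlgebra.ι_sq_zero, mul_zero]
    have h2 : ExteriorAlgebra.ι k (y 0) * ExteriorAlgebra.ι k w =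
        -(ExteriorAlgebra.ι k w * ExteriorAlgebra.ι k (y 0)) := by
      rw [eq_neg_iff_add_eq_zero, add_comm]
      exact ExteriorAlgebra.ι_add_mul_swap w (y 0)
    rw [mul_assoc, h2, mul_neg, ← mul_assoc, h1, neg_zero]
  -- X annihilated by all the y i
  have hXi : ∀ i : Fin (j + 1), X * ExteriorAlgebra.ι k (y i) = 0 := by
    intro i
    refine Fin.cases hZ (fun l => ?_) i
    have : yJ * ExteriorAlgebra.ι k (y l.succ) =
        ExteriorAlgebra.ιMulti k (j + 1) (Fin.snoc (fun i : Fin j => y i.succ) (y l.succ)) := by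
      rw [hyJdef, ExteriorAlgebra.ιMulti_apply, ExteriorAlgebra.ιMulti_apply,
        List.ofFn_succ' (fun i : Fin (j + 1) =>
          ExteriorAlgebra.ι k (Fin.snoc (fun i : Fin j => y i.succ) (y l.succ) i)),
        List.concat_eq_append, List.prod_append, List.prod_cons, List.prod_nil, mul_one]
      simp [Fin.snoc_castSucc, Fin.snoc_last]
    have hzero : ExteriorAlgebra.ιMulti k (j + 1)
        (Fin.snoc (fun i : Fin j => y i.succ) (y l.succ)) = 0 := by
      refine AlternatingMap.map_eq_zero_of_eq _ _ (i := l.castSucc) (j := Fin.last j) ?_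
        (Fin.castSucc_lt_last l).ne
      simp [Fin.snoc_castSucc, Fin.snoc_last]
    rw [hXdef, mul_assoc, this, hzero, mul_zero]
  -- divisibility by the whole product
  obtain ⟨w, hw⟩ := divis (j + 1) y hy X hXi
  have hprod : (List.ofFn fun i : Fin (j + 1) => ExteriorAlgebra.ι k (y i)).prod =
      ExteriorAlgebra.ι k (y 0) * yJ := by
    rw [List.ofFn_succ, List.prod_cons, hyJdef, ExteriorAlgebra.ιMulti_apply]
  have hPmem : ExteriorAlgebra.ι k (y 0) * yJ ∈ ⋀[k]^(1 + j) V :=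
    SetLike.mul_mem_graded hι0 hyJmem
  rw [hprod] at hw
  -- now fix the homogeneity of the cofactor
  rcases Nat.eq_zero_or_pos m with hm | hm
  · -- then X = 0
    have hX0 : X = 0 := by
      have h0 := DirectSum.decompose_of_mem_same (fun i : ℕ => ⋀[k]^i V) hXmem
      rw [hw] at h0
      rw [DirectSum.coe_decompose_mul_of_right_mem_of_not_le (𝒜 := fun i : ℕ => ⋀[k]^i V)
        hPmem (show ¬ 1 + j ≤ m + j by omega)] at h0
      rw [hw, ← h0]
    exact ⟨0, 0, Submodule.zero_mem _, by rw [hX0, zero_mul, zero_mul]⟩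
  · refine ⟨m - 1, DirectSum.decompose (fun i : ℕ => ⋀[k]^i V) w (m - 1), SetLike.coe_mem _, ?_⟩
    have h1 := DirectSum.decompose_of_mem_same (fun i : ℕ => ⋀[k]^i V) hXmem
    rw [hw] at h1
    rw [DirectSum.coe_decompose_mul_of_right_mem_of_le (𝒜 := fun i : ℕ => ⋀[k]^i V)
      hPmem (show 1 + j ≤ m + j by omega)] at h1
    have h2 : m + j - (1 + j) = m - 1 := by omega
    rw [h2] at h1
    rw [hw, ← h1]
    exact (mul_assoc _ _ _).symm
end

section
/- Let $V$ be a finite-dimensional vector space over a field $k$ of characteristic zero and let $A = T(V)/(xyt - txy : x,y,t \in V)$ be the quotient of the tensor algebra by the two-sided ideal generated by $xyt - txy$ for all $x, y, t \in V$. Then for every $p \geq 2$ there is a short exact sequence $0 \to \wedge^p V \xrightarrow{i} A_p \xrightarrow{j} S^p(V) \to 0$, where $j$ is the natural quotient map onto the symmetric power and $i$ sends $x_{i_1} \wedge \cdots \wedge x_{i_p}$ to the class of $x_{i_1} \cdots x_{i_p} - x_{i_{\sigma(1)}} \cdots x_{i_{\sigma(p)}}$ for any odd permutation $\sigma$. 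-/
open scoped TensorProduct
open PiTensorProduct

namespace PBW5

variable (k V : Type) [Field k] [CharZero k] [AddCommGroup V] [Module k V]

/-- The pure tensor `x 0 ⊗ ⋯ ⊗ x (n-1)` in `V^{⊗n}`. -/
noncomputable def tpN (n : ℕ) (x : ℕ → V) : ⨂[k]^n V := tprod k fun i : Fin n => x i

/-- The 3-cycle at positions `a, a+1, a+2` corresponding to the relation `xyt - txy`:
the monomial `⋯ ⊗ x ⊗ y ⊗ t ⊗ ⋯` is matched with `⋯ ⊗ t ⊗ x ⊗ y ⊗ ⋯`. -/
def rot3 (a : ℕ) (x : ℕ → V) : ℕ → V :=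
  fun n =>
    if n = a then x (a + 2)
    else if n = a + 1 then x a
    else if n = a + 2 then x (a + 1)
    else x n

/-- The degree-`p` part of the two-sided ideal of `T(V)` generated by the elements
`x ⊗ y ⊗ t - t ⊗ x ⊗ y` (`x, y, t ∈ V`), i.e. `∑_{a+3+b=p} V^{⊗a} ⊗ R ⊗ V^{⊗b}` with
`R = span{xyt - txy}`; so `A_p = V^{⊗p} / (this)` is the degree-`p` part of
`A = T(V)/(xyt - txy)`. -/
noncomputable def relSub (p : ℕ) : Submodule k (⨂[k]^p V) :=
  Submodule.span k
    {d | ∃ (x : ℕ → V) (a : ℕ), a + 3 ≤ p ∧ d = tpN k V p x - tpN k V p (rot3 V a x)}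

/-- The subspace of `V^{⊗p}` spanned by all differences `x_{1} ⊗ ⋯ ⊗ x_{p} - x_{σ1} ⊗ ⋯`,
so that `V^{⊗p}/(this)` is the symmetric power `S^p(V)`. -/
noncomputable def symSub (p : ℕ) : Submodule k (⨂[k]^p V) :=
  Submodule.span k
    {d | ∃ (x : Fin p → V) (σ : Equiv.Perm (Fin p)),
      d = tprod k x - tprod k (fun i => x (σ i))}

def Hset (p : ℕ) : Set (Equiv.Perm (Fin p)) :=
  {σ | ∀ x : Fin p → V, tprod k x - tprod k (fun i => x (σ i)) ∈ relSub k V p}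

lemma one_mem_Hset (p : ℕ) : (1 : Equiv.Perm (Fin p)) ∈ Hset k V p := by
  intro x
  simpa using Submodule.zero_mem (relSub k V p)

lemma mul_mem_Hset {p : ℕ} {σ τ : Equiv.Perm (Fin p)} (hσ : σ ∈ Hset k V p)
    (hτ : τ ∈ Hset k V p) : σ * τ ∈ Hset k V p := by
  intro x
  have h1 := hσ x
  have h2 := hτ (fun i => x (σ i))
  have h3 := Submodule.add_mem _ h1 h2
  simpa [Equiv.Perm.mul_apply, sub_add_sub_cancel] using h3

lemma inv_mem_Hset {p : ℕ} {σ : Equiv.Perm (Fin p)} (hσ : σ ∈ Hset k V p) :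
    σ⁻¹ ∈ Hset k V p := by
  intro x
  have h := hσ (fun i => x (σ⁻¹ i))
  simp only [show ∀ i, σ⁻¹ (σ i) = i from fun i => σ.symm_apply_apply i] at h
  simpa using Submodule.neg_mem _ h

def cyc (p a : ℕ) (h : a + 3 ≤ p) : Equiv.Perm (Fin p) :=
  Equiv.swap ⟨a+1, by omega⟩ ⟨a+2, by omega⟩ * Equiv.swap ⟨a, by omega⟩ ⟨a+1, by omega⟩

lemma rot3_coe {p a : ℕ} (h : a + 3 ≤ p) (x : ℕ → V) (i : Fin p) :
    rot3 V a x i = x (cyc p a h i) := by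
  have hp0 : a < p := by omega
  have hp1 : a + 1 < p := by omega
  have hp2 : a + 2 < p := by omega
  have n01 : (⟨a, hp0⟩ : Fin p) ≠ ⟨a+1, hp1⟩ := Fin.ne_of_val_ne (show a ≠ a+1 by omega)
  have n02 : (⟨a, hp0⟩ : Fin p) ≠ ⟨a+2, hp2⟩ := Fin.ne_of_val_ne (show a ≠ a+2 by omega)
  have n12 : (⟨a+1, hp1⟩ : Fin p) ≠ ⟨a+2, hp2⟩ := Fin.ne_of_val_ne (show a+1 ≠ a+2 by omega)
  rcases eq_or_ne (i : ℕ) a with h0 | h0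
  · have hi : i = ⟨a, hp0⟩ := Fin.ext h0
    subst hi
    simp [rot3, cyc, Equiv.Perm.mul_apply, Equiv.swap_apply_left]
  rcases eq_or_ne (i : ℕ) (a+1) with h1 | h1
  · have hi : i = ⟨a+1, hp1⟩ := Fin.ext h1
    subst hi
    simp [rot3, cyc, Equiv.Perm.mul_apply, Equiv.swap_apply_right,
      Equiv.swap_apply_of_ne_of_ne n01 n02]
  rcases eq_or_ne (i : ℕ) (a+2) with h2 | h2
  · have hi : i = ⟨a+2, hp2⟩ := Fin.ext h2
    subst hi
    simp [rot3, cyc, Equiv.Perm.mul_apply, Equiv.swap_apply_right,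
      Equiv.swap_apply_of_ne_of_ne n02.symm n12.symm]
  · have ni0 : i ≠ ⟨a, hp0⟩ := Fin.ne_of_val_ne h0
    have ni1 : i ≠ ⟨a+1, hp1⟩ := Fin.ne_of_val_ne h1
    have ni2 : i ≠ ⟨a+2, hp2⟩ := Fin.ne_of_val_ne h2
    simp [rot3, cyc, Equiv.Perm.mul_apply,
      Equiv.swap_apply_of_ne_of_ne ni0 ni1, Equiv.swap_apply_of_ne_of_ne ni1 ni2,
      h0, h1, h2]

lemma cyc_mem_Hset {p a : ℕ} (h : a + 3 ≤ p) : cyc p a h ∈ Hset k V p := by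
  intro x
  classical
  set y : ℕ → V := fun n => if hn : n < p then x ⟨n, hn⟩ else 0 with hy
  apply Submodule.subset_span
  refine ⟨y, a, h, ?_⟩
  have h1 : tpN k V p y = tprod k x := by
    unfold tpN
    congr 1
    funext i
    simp [hy]
  have h2 : tpN k V p (rot3 V a y) = tprod k fun i => x (cyc p a h i) := by
    unfold tpN
    congr 1
    funext i
    rw [rot3_coe (V := V) h y i]
    simp [hy]
  rw [h1, h2]


lemma pair_le_mem_Hset (a : ℕ) {p : ℕ} (ha : a + 2 ≤ p) :
    ∀ b (hab : a ≤ b) (hb2 : b + 2 ≤ p),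
      Equiv.swap (⟨a, by omega⟩ : Fin p) ⟨a+1, by omega⟩ *
        Equiv.swap (⟨b, by omega⟩ : Fin p) ⟨b+1, by omega⟩ ∈ Hset k V p := by
  intro b hab
  induction b, hab using Nat.le_induction with
  | base =>
    intro _
    rw [Equiv.swap_mul_self]
    exact one_mem_Hset k V p
  | succ b hab ih =>
    intro hb1
    have hb : b + 2 ≤ p := by omega
    have h1 := ih hb
    have h2 : Equiv.swap (⟨b, by omega⟩ : Fin p) ⟨b+1, by omega⟩ *
        Equiv.swap (⟨b+1, by omega⟩ : Fin p) ⟨b+2, by omega⟩ ∈ Hset k V p := by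
      have h3 := inv_mem_Hset k V (cyc_mem_Hset k V (show b + 3 ≤ p by omega))
      unfold cyc at h3
      simpa [mul_inv_rev, Equiv.swap_inv] using h3
    have E : Equiv.swap (⟨a, by omega⟩ : Fin p) ⟨a+1, by omega⟩ *
        Equiv.swap (⟨b+1, by omega⟩ : Fin p) ⟨b+2, by omega⟩ =
        (Equiv.swap (⟨a, by omega⟩ : Fin p) ⟨a+1, by omega⟩ *
          Equiv.swap (⟨b, by omega⟩ : Fin p) ⟨b+1, by omega⟩) *
        (Equiv.swap (⟨b, by omega⟩ : Fin p) ⟨b+1, by omega⟩ *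
          Equiv.swap (⟨b+1, by omega⟩ : Fin p) ⟨b+2, by omega⟩) := by
      rw [mul_assoc, Equiv.swap_mul_self_mul]
    have h4 := mul_mem_Hset k V h1 h2
    rw [← E] at h4
    exact h4

lemma pair_mem_Hset (a b : ℕ) {p : ℕ} (ha : a + 2 ≤ p) (hb : b + 2 ≤ p) :
    Equiv.swap (⟨a, by omega⟩ : Fin p) ⟨a+1, by omega⟩ *
      Equiv.swap (⟨b, by omega⟩ : Fin p) ⟨b+1, by omega⟩ ∈ Hset k V p := by
  rcases le_total a b with hab | hab
  · exact pair_le_mem_Hset k V a ha b hab hb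
  · have h := inv_mem_Hset k V (pair_le_mem_Hset k V b hb a hab ha)
    simpa [mul_inv_rev, Equiv.swap_inv] using h

lemma swap_s0_mem_Hset {p : ℕ} (hp : 2 ≤ p) (i j : Fin p) (hij : i ≠ j) :
    Equiv.swap i j * Equiv.swap (⟨0, by omega⟩ : Fin p) ⟨1, by omega⟩ ∈ Hset k V p := by
  suffices H : ∀ n (i j : Fin p), (j : ℕ) - (i : ℕ) ≤ n → (i : ℕ) < (j : ℕ) →
      Equiv.swap i j * Equiv.swap (⟨0, by omega⟩ : Fin p) ⟨1, by omega⟩ ∈ Hset k V p by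
    have hv : (i : ℕ) ≠ (j : ℕ) := fun hv => hij (Fin.ext hv)
    rcases hv.lt_or_gt with h | h
    · exact H _ i j le_rfl h
    · rw [Equiv.swap_comm]
      exact H _ j i le_rfl h
  intro n
  induction n with
  | zero => intro i j h1 h2; omega
  | succ n ih =>
    intro i j h1 h2
    by_cases hj : (j : ℕ) = (i : ℕ) + 1
    · have hj' : j = ⟨(i : ℕ) + 1, by omega⟩ := Fin.ext hj
      rw [hj']
      have := pair_mem_Hset k V (i : ℕ) 0 (show (i:ℕ) + 2 ≤ p by omega) (by omega)
      exact this
    · have hlt : (i : ℕ) + 1 < (j : ℕ) := by omega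
      have hi'p : (i : ℕ) + 1 < p := by omega
      set i' : Fin p := ⟨(i : ℕ) + 1, hi'p⟩ with hidef
      have hval : (i' : ℕ) = (i : ℕ) + 1 := rfl
      have hi'j : i' ≠ j := Fin.ne_of_val_ne (show (i:ℕ)+1 ≠ (j:ℕ) by omega)
      have hij' : i ≠ j := Fin.ne_of_val_ne (show (i:ℕ) ≠ (j:ℕ) by omega)
      have key : Equiv.swap i j = Equiv.swap i i' * Equiv.swap i' j * Equiv.swap i i' := by
        have hk := Equiv.swap_mul_swap_mul_swap (x := j) (y := i') (z := i) hi'j.symm hij'.symm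
        rw [Equiv.swap_comm i' i, Equiv.swap_comm j i'] at hk
        exact hk.symm
      have hA : Equiv.swap i i' * Equiv.swap (⟨0, by omega⟩ : Fin p) ⟨1, by omega⟩ ∈
          Hset k V p := by
        have := pair_mem_Hset k V (i : ℕ) 0 (show (i:ℕ) + 2 ≤ p by omega) (by omega)
        exact this
      have hB : Equiv.swap (⟨0, by omega⟩ : Fin p) ⟨1, by omega⟩ * Equiv.swap i' j ∈
          Hset k V p := by
        have h5 := inv_mem_Hset k V (ih i' j (by omega) (by omega))
        simpa [mul_inv_rev, Equiv.swap_inv] using h5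
      have E : Equiv.swap i j * Equiv.swap (⟨0, by omega⟩ : Fin p) ⟨1, by omega⟩ =
          (Equiv.swap i i' * Equiv.swap (⟨0, by omega⟩ : Fin p) ⟨1, by omega⟩) *
          ((Equiv.swap (⟨0, by omega⟩ : Fin p) ⟨1, by omega⟩ * Equiv.swap i' j) *
            (Equiv.swap i i' * Equiv.swap (⟨0, by omega⟩ : Fin p) ⟨1, by omega⟩)) := by
        rw [key]
        simp only [mul_assoc, Equiv.swap_mul_self_mul]
      rw [E]
      exact mul_mem_Hset k V hA (mul_mem_Hset k V hB hA)

lemma two_swaps_mem_Hset {p : ℕ} (hp : 2 ≤ p) (i j a b : Fin p) (hij : i ≠ j)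
    (hab : a ≠ b) : Equiv.swap i j * Equiv.swap a b ∈ Hset k V p := by
  have h1 := swap_s0_mem_Hset k V hp i j hij
  have h2 := inv_mem_Hset k V (swap_s0_mem_Hset k V hp a b hab)
  have h3 := mul_mem_Hset k V h1 h2
  simpa [mul_inv_rev, Equiv.swap_inv, mul_assoc, Equiv.swap_mul_self_mul] using h3

lemma even_mem_Hset {p : ℕ} (hp : 2 ≤ p) (σ : Equiv.Perm (Fin p))
    (hσ : Equiv.Perm.sign σ = 1) : σ ∈ Hset k V p := by
  have h01 : (⟨0, by omega⟩ : Fin p) ≠ ⟨1, by omega⟩ :=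
    Fin.ne_of_val_ne (show (0:ℕ) ≠ 1 by omega)
  suffices H : ∀ σ : Equiv.Perm (Fin p),
      (Equiv.Perm.sign σ = 1 → σ ∈ Hset k V p) ∧
      (Equiv.Perm.sign σ = -1 →
        Equiv.swap (⟨0, by omega⟩ : Fin p) ⟨1, by omega⟩ * σ ∈ Hset k V p) from
    (H σ).1 hσ
  intro σ'
  refine Equiv.Perm.swap_induction_on σ' ?_ ?_
  · refine ⟨fun _ => one_mem_Hset k V p, fun h => absurd ?_ (by decide : ¬((1:ℤˣ) = -1))⟩
    rwa [_root_.map_one] at h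
  · intro f x y hxy IH
    have hs : Equiv.Perm.sign (Equiv.swap x y * f) = - Equiv.Perm.sign f := by
      rw [_root_.map_mul, Equiv.Perm.sign_swap hxy, neg_one_mul]
    constructor
    · intro hone
      rw [hs] at hone
      have hf : Equiv.Perm.sign f = -1 := neg_eq_iff_eq_neg.mp hone
      have h2 := IH.2 hf
      have E : Equiv.swap x y * f =
          (Equiv.swap x y * Equiv.swap (⟨0, by omega⟩ : Fin p) ⟨1, by omega⟩) *
          (Equiv.swap (⟨0, by omega⟩ : Fin p) ⟨1, by omega⟩ * f) := by
        simp only [mul_assoc, Equiv.swap_mul_self_mul]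
      rw [E]
      exact mul_mem_Hset k V (two_swaps_mem_Hset k V hp x y _ _ hxy h01) h2
    · intro hone
      rw [hs] at hone
      have hf : Equiv.Perm.sign f = 1 := neg_inj.mp hone
      rw [← mul_assoc]
      exact mul_mem_Hset k V (two_swaps_mem_Hset k V hp _ _ x y h01 hxy) (IH.1 hf)

lemma odd_diff_mem {p : ℕ} (hp : 2 ≤ p) (σ : Equiv.Perm (Fin p))
    (hσ : Equiv.Perm.sign σ = -1) (x : Fin p → V) :
    tprod k (fun t => x (σ t)) -
      tprod k (fun t => x (Equiv.swap (⟨0, by omega⟩ : Fin p) ⟨1, by omega⟩ t)) ∈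
      relSub k V p := by
  have h01 : (⟨0, by omega⟩ : Fin p) ≠ ⟨1, by omega⟩ :=
    Fin.ne_of_val_ne (show (0:ℕ) ≠ 1 by omega)
  have hsign : Equiv.Perm.sign
      ((Equiv.swap (⟨0, by omega⟩ : Fin p) ⟨1, by omega⟩)⁻¹ * σ) = 1 := by
    rw [_root_.map_mul, Equiv.Perm.sign_inv, Equiv.Perm.sign_swap h01, hσ]
    decide
  have h := even_mem_Hset k V hp _ hsign
    (fun t => x (Equiv.swap (⟨0, by omega⟩ : Fin p) ⟨1, by omega⟩ t))
  have hfun : (fun i => x (Equiv.swap (⟨0, by omega⟩ : Fin p) ⟨1, by omega⟩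
      (((Equiv.swap (⟨0, by omega⟩ : Fin p) ⟨1, by omega⟩)⁻¹ * σ) i))) = fun i => x (σ i) := by
    funext t
    simp [Equiv.Perm.mul_apply, Equiv.Perm.inv_def, Equiv.apply_symm_apply]
  rw [hfun] at h
  simpa using Submodule.neg_mem _ h

lemma relSub_le_symSub (p : ℕ) : relSub k V p ≤ symSub k V p := by
  apply Submodule.span_le.2
  rintro d ⟨x, a, ha, rfl⟩
  apply Submodule.subset_span
  refine ⟨fun i => x i, cyc p a ha, ?_⟩
  have h2 : tpN k V p (rot3 V a x) =
      tprod k fun i : Fin p => x ((cyc p a ha i : Fin p) : ℕ) := by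
    unfold tpN
    congr 1
    funext i
    exact rot3_coe (V := V) ha x i
  rw [show tpN k V p x = tprod k fun i : Fin p => x (i : ℕ) from rfl, h2]

/-- Let `V` be a finite-dimensional vector space over a field `k` of
characteristic zero and `A = T(V)/(xyt - txy : x,y,t ∈ V)`.  For every `p ≥ 2` there is a
short exact sequence `0 → ∧^p V →ⁱ A_p →ʲ S^p(V) → 0`, where `j` is the natural quotient map
and `i` sends `x₁ ∧ ⋯ ∧ x_p` to the class of `x₁ ⊗ ⋯ ⊗ x_p - x_{σ1} ⊗ ⋯ ⊗ x_{σp}` for any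
odd permutation `σ` (the value being independent of that choice). -/
theorem stmt5 [FiniteDimensional k V] (p : ℕ) (hp : 2 ≤ p) :
    ∃ (i : (⋀[k]^p V) →ₗ[k] ((⨂[k]^p V) ⧸ relSub k V p))
      (j : ((⨂[k]^p V) ⧸ relSub k V p) →ₗ[k] ((⨂[k]^p V) ⧸ symSub k V p)),
      (∀ (x : Fin p → V) (σ : Equiv.Perm (Fin p)), Equiv.Perm.sign σ = -1 →
        i ⟨ExteriorAlgebra.ιMulti k p x, ExteriorAlgebra.ιMulti_range k p (Set.mem_range_self x)⟩ =
          Submodule.Quotient.mk (tprod k x - tprod k (fun t => x (σ t)))) ∧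
      (∀ t : ⨂[k]^p V,
        j (Submodule.Quotient.mk t) = Submodule.Quotient.mk t) ∧
      Function.Injective i ∧
      Function.Surjective j ∧
      LinearMap.range i = LinearMap.ker j := by
  classical
  have h01 : (⟨0, by omega⟩ : Fin p) ≠ ⟨1, by omega⟩ :=
    Fin.ne_of_val_ne (show (0:ℕ) ≠ 1 by omega)
  set σ₀ : Equiv.Perm (Fin p) := Equiv.swap (⟨0, by omega⟩ : Fin p) ⟨1, by omega⟩ with hσ₀
  have hsign0 : Equiv.Perm.sign σ₀ = -1 := Equiv.Perm.sign_swap h01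
  -- the alternating map defining `i`
  set A : V [⋀^Fin p]→ₗ[k] ((⨂[k]^p V) ⧸ relSub k V p) :=
    { toMultilinearMap := (relSub k V p).mkQ.compMultilinearMap
        ((PiTensorProduct.tprod k) - (MultilinearMap.domDomCongr σ₀ (PiTensorProduct.tprod k)))
      map_eq_zero_of_eq' := by
        intro v a b hvab hab
        have hswap : ∀ u, v (Equiv.swap a b u) = v u := by
          intro u
          rcases eq_or_ne u a with rfl | hua
          · rw [Equiv.swap_apply_left]; exact hvab.symm
          rcases eq_or_ne u b with rfl | hub
          · rw [Equiv.swap_apply_right]; exact hvab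
          · rw [Equiv.swap_apply_of_ne_of_ne hua hub]
        have hev : Equiv.Perm.sign (Equiv.swap a b * σ₀) = 1 := by
          rw [_root_.map_mul, Equiv.Perm.sign_swap hab, hσ₀, Equiv.Perm.sign_swap h01]
          decide
        have hmem := even_mem_Hset k V hp _ hev v
        have hfun : (fun i => v ((Equiv.swap a b * σ₀) i)) = fun i => v (σ₀ i) := by
          funext t
          rw [Equiv.Perm.mul_apply, hswap]
        rw [hfun] at hmem
        show (relSub k V p).mkQ ((PiTensorProduct.tprod k) v - (PiTensorProduct.tprod k) fun i => v (σ₀ i)) = 0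
        rw [Submodule.mkQ_apply, Submodule.Quotient.mk_eq_zero]
        exact hmem } with hA
  set fbig : ∀ n : ℕ, V [⋀^Fin n]→ₗ[k] ((⨂[k]^p V) ⧸ relSub k V p) :=
    Function.update (fun n : ℕ => (0 : V [⋀^Fin n]→ₗ[k] ((⨂[k]^p V) ⧸ relSub k V p))) p A
    with hfbig
  set i0 : (⋀[k]^p V) →ₗ[k] ((⨂[k]^p V) ⧸ relSub k V p) :=
    (ExteriorAlgebra.liftAlternating fbig).comp (Submodule.subtype (⋀[k]^p V)) with hi0
  have heval : ∀ x : Fin p → V,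
      ExteriorAlgebra.liftAlternating fbig (ExteriorAlgebra.ιMulti k p x) =
        Submodule.Quotient.mk (tprod k x - tprod k fun t => x (σ₀ t)) := by
    intro x
    rw [ExteriorAlgebra.liftAlternating_apply_ιMulti, hfbig, Function.update_self]
    rfl
  have hodd : ∀ (x : Fin p → V) (σ : Equiv.Perm (Fin p)), Equiv.Perm.sign σ = -1 →
      (Submodule.Quotient.mk (tprod k x - tprod k fun t => x (σ₀ t)) :
          (⨂[k]^p V) ⧸ relSub k V p) =
        Submodule.Quotient.mk (tprod k x - tprod k fun t => x (σ t)) := by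
    intro x σ hσ
    rw [Submodule.Quotient.eq, sub_sub_sub_cancel_left]
    exact odd_diff_mem k V hp σ hσ x
  set j0 : ((⨂[k]^p V) ⧸ relSub k V p) →ₗ[k] ((⨂[k]^p V) ⧸ symSub k V p) :=
    Submodule.liftQ (relSub k V p) (symSub k V p).mkQ
      (by rw [Submodule.ker_mkQ]; exact relSub_le_symSub k V p) with hj0
  have hj : ∀ t : ⨂[k]^p V,
      j0 (Submodule.Quotient.mk t) = Submodule.Quotient.mk t := by
    intro t
    rw [hj0, Submodule.liftQ_apply, Submodule.mkQ_apply]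
  -- the retraction used for injectivity
  set π : (⨂[k]^p V) →ₗ[k] ExteriorAlgebra k V :=
    PiTensorProduct.lift (ExteriorAlgebra.ιMulti k p (M := V)).toMultilinearMap with hπdef
  have hπ : relSub k V p ≤ LinearMap.ker π := by
    apply Submodule.span_le.2
    rintro d ⟨x, a, ha, rfl⟩
    rw [SetLike.mem_coe, LinearMap.mem_ker, map_sub]
    have e1 : π (tpN k V p x) = ExteriorAlgebra.ιMulti k p (fun i : Fin p => x (i : ℕ)) := by
      rw [show tpN k V p x = tprod k fun i : Fin p => x (i : ℕ) from rfl, hπdef,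
        PiTensorProduct.lift.tprod]
      rfl
    have e2 : π (tpN k V p (rot3 V a x)) =
        ExteriorAlgebra.ιMulti k p ((fun i : Fin p => x (i : ℕ)) ∘ (cyc p a ha)) := by
      rw [show tpN k V p (rot3 V a x) = tprod k fun i : Fin p => rot3 V a x (i : ℕ) from rfl,
        hπdef, PiTensorProduct.lift.tprod]
      have hcomp : (fun i : Fin p => rot3 V a x (i : ℕ)) =
          (fun i : Fin p => x (i : ℕ)) ∘ (cyc p a ha) := by
        funext t
        exact rot3_coe (V := V) ha x t
      rw [hcomp]
      rfl
    have hsc : Equiv.Perm.sign (cyc p a ha) = 1 := by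
      unfold cyc
      rw [_root_.map_mul, Equiv.Perm.sign_swap (Fin.ne_of_val_ne (show a+1 ≠ a+2 by omega)),
        Equiv.Perm.sign_swap (Fin.ne_of_val_ne (show a ≠ a+1 by omega))]
      decide
    rw [e1, e2, AlternatingMap.map_perm, hsc, one_smul, sub_self]
  set πbar : ((⨂[k]^p V) ⧸ relSub k V p) →ₗ[k] ExteriorAlgebra k V :=
    Submodule.liftQ (relSub k V p) π hπ with hπbar
  have hG : ∀ y, y ∈ Submodule.span k (Set.range (ExteriorAlgebra.ιMulti k p (M := V))) →
      πbar (ExteriorAlgebra.liftAlternating fbig y) = (2:k) • y := by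
    intro y hy
    induction hy using Submodule.span_induction with
    | mem z hz =>
      obtain ⟨x, rfl⟩ := hz
      rw [heval x, hπbar, Submodule.liftQ_apply, map_sub]
      have e1 : π ((PiTensorProduct.tprod k) x) = ExteriorAlgebra.ιMulti k p x := by
        rw [hπdef, PiTensorProduct.lift.tprod]; rfl
      have e2 : π ((PiTensorProduct.tprod k) fun t => x (σ₀ t)) = ExteriorAlgebra.ιMulti k p (x ∘ σ₀) := by
        rw [hπdef, PiTensorProduct.lift.tprod]; rfl
      rw [e1, e2, AlternatingMap.map_perm, hsign0]
      rw [show ((-1 : ℤˣ) • (ExteriorAlgebra.ιMulti k p x : ExteriorAlgebra k V)) =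
        -(ExteriorAlgebra.ιMulti k p x) by simp, sub_neg_eq_add, two_smul k]
    | zero => simp
    | add u v hu hv ihu ihv => rw [map_add, map_add, ihu, ihv, smul_add]
    | smul c u hu ihu => rw [map_smul, map_smul, ihu, smul_comm]
  refine ⟨i0, j0, ?_, hj, ?_, ?_, ?_⟩
  · intro x σ hσ
    have : i0 ⟨ExteriorAlgebra.ιMulti k p x,
        ExteriorAlgebra.ιMulti_range k p (Set.mem_range_self x)⟩ =
        ExteriorAlgebra.liftAlternating fbig (ExteriorAlgebra.ιMulti k p x) := rfl
    rw [this, heval x, hodd x σ hσ]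
  · intro v w hvw
    have hv := hG (v : ExteriorAlgebra k V)
      (by rw [ExteriorAlgebra.ιMulti_span_fixedDegree]; exact v.2)
    have hw := hG (w : ExteriorAlgebra k V)
      (by rw [ExteriorAlgebra.ιMulti_span_fixedDegree]; exact w.2)
    have h3 : (2:k) • (v : ExteriorAlgebra k V) = (2:k) • (w : ExteriorAlgebra k V) := by
      rw [← hv, ← hw]
      exact congrArg πbar hvw
    have h4 : (v : ExteriorAlgebra k V) = (w : ExteriorAlgebra k V) := by
      calc (v : ExteriorAlgebra k V) = (2:k)⁻¹ • ((2:k) • (v : ExteriorAlgebra k V)) :=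
            (inv_smul_smul₀ two_ne_zero _).symm
        _ = (2:k)⁻¹ • ((2:k) • (w : ExteriorAlgebra k V)) := by rw [h3]
        _ = (w : ExteriorAlgebra k V) := inv_smul_smul₀ two_ne_zero _
    exact Subtype.ext h4
  · intro y
    obtain ⟨t, rfl⟩ := Submodule.Quotient.mk_surjective (symSub k V p) y
    exact ⟨Submodule.Quotient.mk t, hj t⟩
  · have hker : LinearMap.ker j0 = Submodule.map (relSub k V p).mkQ (symSub k V p) := by
      rw [hj0, Submodule.ker_liftQ, Submodule.ker_mkQ]
    have hrange : LinearMap.range i0 = Submodule.map (relSub k V p).mkQ (symSub k V p) := by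
      rw [hi0, LinearMap.range_comp, Submodule.range_subtype,
        ← ExteriorAlgebra.ιMulti_span_fixedDegree, Submodule.map_span,
        show symSub k V p = Submodule.span k
          {d | ∃ (x : Fin p → V) (σ : Equiv.Perm (Fin p)),
            d = tprod k x - tprod k (fun i => x (σ i))} from rfl,
        Submodule.map_span]
      apply le_antisymm
      · refine Submodule.span_le.2 ?_
        rintro z ⟨w, ⟨x, rfl⟩, rfl⟩
        apply Submodule.subset_span
        refine ⟨tprod k x - tprod k fun t => x (σ₀ t), ⟨x, σ₀, rfl⟩, ?_⟩
        rw [Submodule.mkQ_apply, ← heval x]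
      · refine Submodule.span_le.2 ?_
        rintro z ⟨w, ⟨x, σ, rfl⟩, rfl⟩
        rcases Int.units_eq_one_or (Equiv.Perm.sign σ) with hsg | hsg
        · have hmem := even_mem_Hset k V hp σ hsg x
          have hzero : (relSub k V p).mkQ (tprod k x - tprod k fun t => x (σ t)) = 0 := by
            rw [Submodule.mkQ_apply, Submodule.Quotient.mk_eq_zero]
            exact hmem
          rw [SetLike.mem_coe, hzero]
          exact Submodule.zero_mem _
        · apply Submodule.subset_span
          refine ⟨ExteriorAlgebra.ιMulti k p x, ⟨x, rfl⟩, ?_⟩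
          rw [heval x, hodd x σ hsg, Submodule.mkQ_apply]
    rw [hrange, hker]

end PBW5
end

section
/- In characteristic zero, the algebra $U = k[x,y,z]/(y^2 - xz,\ xy,\ z^2 + x)$ is finite-dimensional as a $k$-vector space, whereas the associated graded algebra $A = k[x,y,z]/(y^2 - xz,\ xy,\ z^2)$ has Krull dimension $1$; in particular $\mathrm{gr}\, U$ is not isomorphic to $A$, so $U$ is not a PBW-deformation of $A$. -/
open MvPolynomial

section Aux

variable {R₀ : Type*} [CommRing R₀]

lemma aux_mem_span3 {f1 f2 f3 p : R₀} (a b c : R₀) (h : p = a * f1 + b * f2 + c * f3) :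
    p ∈ Ideal.span {f1, f2, f3} := by
  have h1 : f1 ∈ Ideal.span ({f1, f2, f3} : Set R₀) := Ideal.subset_span (by simp)
  have h2 : f2 ∈ Ideal.span ({f1, f2, f3} : Set R₀) := Ideal.subset_span (by simp)
  have h3 : f3 ∈ Ideal.span ({f1, f2, f3} : Set R₀) := Ideal.subset_span (by simp)
  rw [h]
  exact add_mem (add_mem (Ideal.mul_mem_left _ _ h1) (Ideal.mul_mem_left _ _ h2))
    (Ideal.mul_mem_left _ _ h3)

lemma aux_isIntegral_of_pow_eq_zero {k A : Type*} [CommRing k] [CommRing A] [Algebra k A]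
    {a : A} (n : ℕ) (h : a ^ n = 0) : IsIntegral k a :=
  ⟨Polynomial.X ^ n, Polynomial.monic_X_pow n, by simp [h]⟩

/-- If `I` is contained in the nilradical, passing to the quotient does not decrease
Krull dimension. -/
lemma aux_ringKrullDim_le_quotient {I : Ideal R₀} (hI : I ≤ nilradical R₀) :
    ringKrullDim R₀ ≤ ringKrullDim (R₀ ⧸ I) := by
  have hsurj : Function.Surjective (Ideal.Quotient.mk I) := Ideal.Quotient.mk_surjective
  have hle : ∀ p : PrimeSpectrum R₀, RingHom.ker (Ideal.Quotient.mk I) ≤ p.asIdeal := by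
    intro p
    rw [Ideal.mk_ker]
    exact le_trans hI (nilradical_le_prime p.asIdeal)
  have hcomap : ∀ p : PrimeSpectrum R₀,
      (p.asIdeal.map (Ideal.Quotient.mk I)).comap (Ideal.Quotient.mk I) = p.asIdeal := by
    intro p
    rw [Ideal.comap_map_of_surjective _ hsurj]
    exact sup_eq_left.mpr (hle p)
  refine Order.krullDim_le_of_strictMono
    (fun p => ⟨(p.asIdeal).map (Ideal.Quotient.mk I),
      Ideal.map_isPrime_of_surjective hsurj (hle p)⟩) ?_
  intro p q hpq
  show (p.asIdeal).map (Ideal.Quotient.mk I) < (q.asIdeal).map (Ideal.Quotient.mk I)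
  refine lt_of_le_of_ne (Ideal.map_mono hpq.le) ?_
  intro heq
  have : p.asIdeal = q.asIdeal := by
    rw [← hcomap p, ← hcomap q, heq]
  exact hpq.ne (PrimeSpectrum.ext this)

/-- The Krull dimension of `k[X]` is one. -/
lemma aux_ringKrullDim_polynomial (k : Type*) [Field k] :
    ringKrullDim (Polynomial k) = 1 := by
  classical
  have hXne : (Polynomial.X : Polynomial k) ≠ 0 := Polynomial.X_ne_zero
  have hprime : (Ideal.span {(Polynomial.X : Polynomial k)}).IsPrime :=
    (Ideal.span_singleton_prime hXne).mpr Polynomial.prime_X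
  apply le_antisymm
  · -- dimension at most one
    rw [ringKrullDim, Order.krullDim_eq_iSup_length]
    rw [show (1 : WithBot ℕ∞) = ((1 : ℕ∞) : WithBot ℕ∞) from rfl, WithBot.coe_le_coe]
    refine iSup_le fun p => ?_
    rw [show (1 : ℕ∞) = ((1 : ℕ) : ℕ∞) from rfl, Nat.cast_le]
    by_contra hlen
    push_neg at hlen
    have h2 : 2 ≤ p.length := hlen
    have h01 : p.toFun ⟨0, by omega⟩ < p.toFun ⟨1, by omega⟩ :=
      p.strictMono (show (0:ℕ) < 1 by omega)
    have h12 : p.toFun ⟨1, by omega⟩ < p.toFun ⟨2, by omega⟩ :=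
      p.strictMono (show (1:ℕ) < 2 by omega)
    set q0 := p.toFun ⟨0, by omega⟩
    set q1 := p.toFun ⟨1, by omega⟩
    set q2 := p.toFun ⟨2, by omega⟩
    have hq1ne : (q1 : PrimeSpectrum (Polynomial k)).asIdeal ≠ ⊥ := by
      intro hbot
      have : q0.asIdeal < q1.asIdeal := h01
      rw [hbot] at this
      exact (not_lt_bot this)
    haveI := q1.2
    have hq1max : q1.asIdeal.IsMaximal := IsPrime.to_maximal_ideal hq1ne
    have h12' : q1.asIdeal < q2.asIdeal := h12
    exact h12'.ne (hq1max.eq_of_le q2.2.ne_top h12'.le)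
  · -- dimension at least one
    have hbot : ((⊥ : Ideal (Polynomial k))).IsPrime := Ideal.bot_prime
    let P0 : PrimeSpectrum (Polynomial k) := ⟨⊥, hbot⟩
    let P1 : PrimeSpectrum (Polynomial k) := ⟨Ideal.span {Polynomial.X}, hprime⟩
    have hlt : P0 < P1 := by
      show (⊥ : Ideal (Polynomial k)) < Ideal.span {Polynomial.X}
      refine lt_of_le_of_ne bot_le ?_
      intro h
      exact hXne (by
        have : (Polynomial.X : Polynomial k) ∈ Ideal.span {(Polynomial.X : Polynomial k)} :=
          Ideal.subset_span rfl
        rw [← h] at this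
        simpa using this)
    let c : LTSeries (PrimeSpectrum (Polynomial k)) :=
      ⟨1, ![P0, P1], by
        intro i
        fin_cases i
        simpa using hlt⟩
    have := Order.LTSeries.length_le_krullDim c
    simpa using this

end Aux

set_option maxHeartbeats 1600000

/-- In characteristic zero the algebra
`U = k[x,y,z]/(y² - xz, xy, z² + x)` is finite-dimensional as a `k`-vector space, whereas the
algebra `A = k[x,y,z]/(y² - xz, xy, z²)` has Krull dimension `1`; in particular no
finite-dimensional commutative `k`-algebra (such as the associated graded algebra `gr U` of
`U`) is isomorphic to `A`, so `U` is not a PBW-deformation of `A`. -/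
theorem stmt11 (k : Type) [Field k] [CharZero k] :
    FiniteDimensional k
      (MvPolynomial (Fin 3) k ⧸
        Ideal.span {(X 1 : MvPolynomial (Fin 3) k) ^ 2 - X 0 * X 2, X 0 * X 1,
          (X 2) ^ 2 + X 0}) ∧
    ringKrullDim
      (MvPolynomial (Fin 3) k ⧸
        Ideal.span {(X 1 : MvPolynomial (Fin 3) k) ^ 2 - X 0 * X 2, X 0 * X 1,
          (X 2 : MvPolynomial (Fin 3) k) ^ 2}) = 1 ∧
    ∀ (B : Type) [CommRing B] [Algebra k B], FiniteDimensional k B →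
      IsEmpty
        (B ≃ₐ[k]
          (MvPolynomial (Fin 3) k ⧸
            Ideal.span {(X 1 : MvPolynomial (Fin 3) k) ^ 2 - X 0 * X 2, X 0 * X 1,
              (X 2 : MvPolynomial (Fin 3) k) ^ 2})) := by
  classical
  set f1 : MvPolynomial (Fin 3) k := (X 1 : MvPolynomial (Fin 3) k) ^ 2 - X 0 * X 2 with hf1
  set f2 : MvPolynomial (Fin 3) k := X 0 * X 1 with hf2
  -- the two ideals
  set IU : Ideal (MvPolynomial (Fin 3) k) := Ideal.span {f1, f2, (X 2) ^ 2 + X 0} with hIU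
  set IA : Ideal (MvPolynomial (Fin 3) k) := Ideal.span {f1, f2, (X 2) ^ 2} with hIA
  -- the evaluation morphism killing y and z
  set v : Fin 3 → Polynomial k := ![Polynomial.X, 0, 0] with hv
  have hv0 : v 0 = Polynomial.X := rfl
  have hv1 : v 1 = 0 := rfl
  have hv2 : v 2 = 0 := rfl
  -- Part 1 : U is finite dimensional
  have part1 : FiniteDimensional k (MvPolynomial (Fin 3) k ⧸ IU) := by
    have hx3 : (X 0 : MvPolynomial (Fin 3) k) ^ 3 ∈ IU := by
      refine aux_mem_span3 (-(X 2) ^ 3) (-(X 1 * X 2))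
        (((X 2) ^ 2 + X 0) ^ 2 - 3 * ((X 2) ^ 2 + X 0) * (X 2) ^ 2 + 2 * (X 2) ^ 4
          + (X 1) ^ 2 * X 2) ?_
      rw [hf1, hf2]; ring
    have hy3 : (X 1 : MvPolynomial (Fin 3) k) ^ 3 ∈ IU := by
      refine aux_mem_span3 (X 1) (X 2) 0 ?_
      rw [hf1, hf2]; ring
    have hz5 : (X 2 : MvPolynomial (Fin 3) k) ^ 5 ∈ IU := by
      refine aux_mem_span3 ((X 2) ^ 2) (X 1) ((X 2) ^ 3 - (X 1) ^ 2) ?_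
      rw [hf1, hf2]; ring
    have hgen : ∀ i : Fin 3, IsIntegral k (Ideal.Quotient.mk IU (X i)) := by
      intro i
      fin_cases i
      · exact aux_isIntegral_of_pow_eq_zero 3
          (by rw [← map_pow]; exact Ideal.Quotient.eq_zero_iff_mem.mpr hx3)
      · exact aux_isIntegral_of_pow_eq_zero 3
          (by rw [← map_pow]; exact Ideal.Quotient.eq_zero_iff_mem.mpr hy3)
      · exact aux_isIntegral_of_pow_eq_zero 5
          (by rw [← map_pow]; exact Ideal.Quotient.eq_zero_iff_mem.mpr hz5)
    have htop : Algebra.adjoin k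
        (Set.range fun i : Fin 3 => Ideal.Quotient.mkₐ k IU (X i)) = ⊤ := by
      have : (Set.range fun i : Fin 3 => Ideal.Quotient.mkₐ k IU (X i)) =
          (Ideal.Quotient.mkₐ k IU) '' (Set.range (X : Fin 3 → MvPolynomial (Fin 3) k)) := by
        rw [← Set.range_comp]; rfl
      rw [this, ← AlgHom.map_adjoin, MvPolynomial.adjoin_range_X, Algebra.map_top,
        AlgHom.range_eq_top]
      exact Ideal.Quotient.mkₐ_surjective k IU
    haveI : Algebra.FiniteType k (MvPolynomial (Fin 3) k ⧸ IU) :=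
      Algebra.FiniteType.of_surjective
        (Ideal.Quotient.mkₐ k IU) (Ideal.Quotient.mkₐ_surjective k IU)
    haveI : Algebra.IsIntegral k (MvPolynomial (Fin 3) k ⧸ IU) := by
      constructor
      intro x
      have hx : x ∈ Algebra.adjoin k
          (Set.range fun i : Fin 3 => Ideal.Quotient.mkₐ k IU (X i)) := by
        rw [htop]; trivial
      have hsub : (Set.range fun i : Fin 3 => Ideal.Quotient.mkₐ k IU (X i)) ⊆
          (integralClosure k (MvPolynomial (Fin 3) k ⧸ IU) : Set _) := by
        rintro _ ⟨i, rfl⟩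
        exact hgen i
      exact Algebra.adjoin_le hsub hx
    exact Algebra.IsIntegral.finite
  -- the surjection `A → k[X]`
  have hker : ∀ f ∈ IA, (aeval v) f = 0 := by
    intro f hf
    have hle : IA ≤ RingHom.ker (aeval v : MvPolynomial (Fin 3) k →ₐ[k] Polynomial k) := by
      rw [hIA]
      refine Ideal.span_le.mpr ?_
      rintro g (rfl | rfl | rfl) <;>
        simp [hf1, hf2, RingHom.mem_ker, hv0, hv1, hv2]
    exact (RingHom.mem_ker).mp (hle hf)
  set ψ : (MvPolynomial (Fin 3) k ⧸ IA) →ₐ[k] Polynomial k :=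
    Ideal.Quotient.liftₐ IA (aeval v) hker with hψ
  set g : Polynomial k →ₐ[k] (MvPolynomial (Fin 3) k ⧸ IA) :=
    Polynomial.aeval (Ideal.Quotient.mk IA (X 0)) with hg
  have hψg : ψ.comp g = AlgHom.id k (Polynomial k) := by
    refine Polynomial.algHom_ext ?_
    simp [hψ, hg, hv0, Ideal.Quotient.lift_mk]
    exact (aeval_X v 0).trans hv0
  have hψsurj : Function.Surjective ψ := by
    intro p
    exact ⟨g p, by rw [← AlgHom.comp_apply, hψg]; rfl⟩
  -- Part 2 : Krull dimension of A is 1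
  have part2 : ringKrullDim (MvPolynomial (Fin 3) k ⧸ IA) = 1 := by
    have hge : (1 : WithBot ℕ∞) ≤ ringKrullDim (MvPolynomial (Fin 3) k ⧸ IA) := by
      rw [← aux_ringKrullDim_polynomial k]
      exact ringKrullDim_le_of_surjective ψ.toRingHom hψsurj
    have hle : ringKrullDim (MvPolynomial (Fin 3) k ⧸ IA) ≤ 1 := by
      set N : Ideal (MvPolynomial (Fin 3) k) := Ideal.span {X 1, X 2} with hN
      have hNnil : N.map (Ideal.Quotient.mk IA) ≤ nilradical (MvPolynomial (Fin 3) k ⧸ IA) := by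
        rw [hN, Ideal.map_span]
        refine Ideal.span_le.mpr ?_
        rintro _ ⟨g, (rfl | rfl), rfl⟩
        · refine mem_nilradical.mpr ⟨4, ?_⟩
          rw [← map_pow]
          refine Ideal.Quotient.eq_zero_iff_mem.mpr ?_
          refine aux_mem_span3 ((X 1) ^ 2 + X 0 * X 2) 0 ((X 0) ^ 2) ?_
          rw [hf1, hf2]; ring
        · refine mem_nilradical.mpr ⟨2, ?_⟩
          rw [← map_pow]
          exact Ideal.Quotient.eq_zero_iff_mem.mpr (Ideal.subset_span (by simp))
      have hsup : IA ⊔ N = N := by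
        refine sup_eq_right.mpr ?_
        rw [hIA]
        refine Ideal.span_le.mpr ?_
        rintro g (rfl | rfl | rfl)
        · exact Ideal.mem_span_pair.mpr ⟨X 1, -(X 0), by rw [hf1]; ring⟩
        · exact Ideal.mem_span_pair.mpr ⟨X 0, 0, by rw [hf2]; ring⟩
        · exact Ideal.mem_span_pair.mpr ⟨0, X 2, by ring⟩
      -- the quotient of A by the image of N
      have e1 : ((MvPolynomial (Fin 3) k ⧸ IA) ⧸ N.map (Ideal.Quotient.mk IA)) ≃+*
          (MvPolynomial (Fin 3) k ⧸ N) :=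
        (DoubleQuot.quotQuotEquivQuotSup IA N).trans (Ideal.quotEquivOfEq hsup)
      -- `R ⧸ N ≃ k[X]`
      have hkerN : ∀ f ∈ N, (aeval v) f = 0 := by
        intro f hf
        have hle : N ≤ RingHom.ker (aeval v : MvPolynomial (Fin 3) k →ₐ[k] Polynomial k) := by
          rw [hN]
          refine Ideal.span_le.mpr ?_
          rintro g (rfl | rfl) <;> simp [RingHom.mem_ker, hv1, hv2]
        exact (RingHom.mem_ker).mp (hle hf)
      set fN : (MvPolynomial (Fin 3) k ⧸ N) →ₐ[k] Polynomial k :=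
        Ideal.Quotient.liftₐ N (aeval v) hkerN with hfN
      set gN : Polynomial k →ₐ[k] (MvPolynomial (Fin 3) k ⧸ N) :=
        Polynomial.aeval (Ideal.Quotient.mk N (X 0)) with hgN
      have e2 : (MvPolynomial (Fin 3) k ⧸ N) ≃ₐ[k] Polynomial k := by
        refine AlgEquiv.ofAlgHom fN gN ?_ ?_
        · refine Polynomial.algHom_ext ?_
          simp [hfN, hgN, hv0, Ideal.Quotient.lift_mk]
          exact (aeval_X v 0).trans hv0
        · refine Ideal.Quotient.algHom_ext k (MvPolynomial.algHom_ext ?_)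
          intro i
          fin_cases i
          · simp [hfN, hgN, hv0, Ideal.Quotient.lift_mk]
            change Polynomial.aeval _ (aeval v (X 0)) = _
            simp [hv0]
          · have h1 : Ideal.Quotient.mk N (X 1) = 0 :=
              Ideal.Quotient.eq_zero_iff_mem.mpr (Ideal.subset_span (by simp))
            simp [hfN, hgN, hv1, h1]
          · have h2 : Ideal.Quotient.mk N (X 2) = 0 :=
              Ideal.Quotient.eq_zero_iff_mem.mpr (Ideal.subset_span (by simp))
            simp [hfN, hgN, hv2, h2]
      calc ringKrullDim (MvPolynomial (Fin 3) k ⧸ IA)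
          ≤ ringKrullDim ((MvPolynomial (Fin 3) k ⧸ IA) ⧸ N.map (Ideal.Quotient.mk IA)) :=
            aux_ringKrullDim_le_quotient hNnil
        _ = ringKrullDim (MvPolynomial (Fin 3) k ⧸ N) := ringKrullDim_eq_of_ringEquiv e1
        _ = ringKrullDim (Polynomial k) := ringKrullDim_eq_of_ringEquiv e2.toRingEquiv
        _ = 1 := aux_ringKrullDim_polynomial k
    exact le_antisymm hle hge
  refine ⟨part1, part2, ?_⟩
  -- Part 3 : no finite-dimensional algebra is isomorphic to A
  intro B _ _ hB
  constructor
  intro e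
  haveI : FiniteDimensional k (MvPolynomial (Fin 3) k ⧸ IA) :=
    Module.Finite.equiv e.toLinearEquiv
  haveI : Module.Finite k (Polynomial k) :=
    Module.Finite.of_surjective ψ.toLinearMap hψsurj
  have hrank : Module.rank k (Polynomial k) < Cardinal.aleph0 :=
    Module.rank_lt_aleph0 k (Polynomial k)
  have hbasis : Module.rank k (Polynomial k) = Cardinal.aleph0 := by
    rw [← (Polynomial.basisMonomials k).mk_eq_rank'']
    exact Cardinal.mk_nat
  rw [hbasis] at hrank
  exact lt_irrefl _ hrank
end

section
/- Let $A = T(V)/(P)$ be a filtered algebra where $P \subseteq \bigoplus_{i \leq N} V^{\otimes i}$ is a subspace intersecting $\bigoplus_{i \leq N-1} V^{\otimes i}$ trivially, with top-degree part $R \subseteq V^{\otimes N}$, written as $P = \{r + \alpha_1(r) + \cdots + \alpha_N(r) : r \in R\}$ for linear maps $\alpha_i : R \to V^{\otimes N-i}$. If $(P) \cap F^N T(V) = P$ (where $F^N T(V) = \bigoplus_{i \leq N} V^{\otimes i}$ and $(P)$ is the two-sided ideal generated by $P$), then: (a) the image of $[\mathbf{1}, \alpha_1] = \mathbf{1} \otimes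 \alpha_1 - \alpha_1 \otimes \mathbf{1}$ restricted to $(V \otimes R) \cap (R \otimes V)$ is contained in $R$, and (b) $\alpha_i \circ [\mathbf{1}, \alpha_1] = [\mathbf{1}, \alpha_{i+1}]$ on $(V \otimes R) \cap (R \otimes V)$ for $i = 1, \ldots, N$, where $\alpha_{N+1} = 0$. -/
namespace PBW15

open TensorAlgebra
open scoped TensorProduct

variable (k V : Type) [Field k] [AddCommGroup V] [Module k V]

/-- The image of `V` in the tensor algebra `T(V)`. -/
noncomputable def Vsub : Submodule k (TensorAlgebra k V) :=
  LinearMap.range (TensorAlgebra.ι k : V →ₗ[k] TensorAlgebra k V)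

/-- The filtration `F^N T(V) = ⊕_{i ≤ N} V^{⊗i}` of the tensor algebra. -/
noncomputable def filtr (N : ℕ) : Submodule k (TensorAlgebra k V) :=
  ∑ i ∈ Finset.range (N + 1), (Vsub k V) ^ i

/-- The space of deformed relations `P = {r + α₁(r) + ⋯ + α_N(r) | r ∈ R}`. -/
noncomputable def Psub (N : ℕ) (R : Submodule k (TensorAlgebra k V))
    (α : ℕ → (R →ₗ[k] TensorAlgebra k V)) : Submodule k (TensorAlgebra k V) :=
  LinearMap.range (R.subtype + ∑ i ∈ Finset.Icc 1 N, α i)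

/-- The two-sided ideal of `T(V)` generated by `P`, as a subspace. -/
noncomputable def idealP (N : ℕ) (R : Submodule k (TensorAlgebra k V))
    (α : ℕ → (R →ₗ[k] TensorAlgebra k V)) : Submodule k (TensorAlgebra k V) :=
  Submodule.span k
    {x | ∃ u w : TensorAlgebra k V, ∃ p ∈ Psub k V N R α, x = u * p * w}

/-- The map `V ⊗ R → T(V)`, `v ⊗ r ↦ v · β(r)`, for a linear map `β : R → T(V)`. -/
noncomputable def oneT (R : Submodule k (TensorAlgebra k V))
    (β : R →ₗ[k] TensorAlgebra k V) : V ⊗[k] R →ₗ[k] TensorAlgebra k V :=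
  TensorProduct.lift
    ((LinearMap.mul k (TensorAlgebra k V)).compl₁₂ (TensorAlgebra.ι k) β)

/-- The map `R ⊗ V → T(V)`, `r ⊗ v ↦ β(r) · v`, for a linear map `β : R → T(V)`. -/
noncomputable def tOne (R : Submodule k (TensorAlgebra k V))
    (β : R →ₗ[k] TensorAlgebra k V) : R ⊗[k] V →ₗ[k] TensorAlgebra k V :=
  TensorProduct.lift
    ((LinearMap.mul k (TensorAlgebra k V)).compl₁₂ β (TensorAlgebra.ι k))

section Aux

variable (R : Submodule k (TensorAlgebra k V))

lemma oneT_tmul (β : R →ₗ[k] TensorAlgebra k V) (v : V) (r : R) :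
    oneT k V R β (v ⊗ₜ r) = TensorAlgebra.ι k v * β r := by
  simp [oneT]

lemma tOne_tmul (β : R →ₗ[k] TensorAlgebra k V) (v : V) (r : R) :
    tOne k V R β (r ⊗ₜ v) = β r * TensorAlgebra.ι k v := by
  simp [tOne]

lemma oneT_add (β γ : R →ₗ[k] TensorAlgebra k V) :
    oneT k V R (β + γ) = oneT k V R β + oneT k V R γ := by
  apply TensorProduct.ext'
  intro v r
  simp [oneT_tmul, mul_add]

lemma oneT_zero : oneT k V R (0 : R →ₗ[k] TensorAlgebra k V) = 0 := by
  apply TensorProduct.ext'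
  intro v r
  simp [oneT_tmul]

lemma tOne_add (β γ : R →ₗ[k] TensorAlgebra k V) :
    tOne k V R (β + γ) = tOne k V R β + tOne k V R γ := by
  apply TensorProduct.ext'
  intro r v
  simp [tOne_tmul, add_mul]

lemma tOne_zero : tOne k V R (0 : R →ₗ[k] TensorAlgebra k V) = 0 := by
  apply TensorProduct.ext'
  intro r v
  simp [tOne_tmul]

lemma oneT_sum (s : Finset ℕ) (β : ℕ → R →ₗ[k] TensorAlgebra k V) :
    oneT k V R (∑ i ∈ s, β i) = ∑ i ∈ s, oneT k V R (β i) := by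
  classical
  induction s using Finset.induction_on with
  | empty => simpa using oneT_zero k V R
  | insert _ _ h ih => rw [Finset.sum_insert h, oneT_add, ih, Finset.sum_insert h]

lemma tOne_sum (s : Finset ℕ) (β : ℕ → R →ₗ[k] TensorAlgebra k V) :
    tOne k V R (∑ i ∈ s, β i) = ∑ i ∈ s, tOne k V R (β i) := by
  classical
  induction s using Finset.induction_on with
  | empty => simpa using tOne_zero k V R
  | insert _ _ h ih => rw [Finset.sum_insert h, tOne_add, ih, Finset.sum_insert h]

lemma oneT_mem (β : R →ₗ[k] TensorAlgebra k V) (M : Submodule k (TensorAlgebra k V))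
    (hβ : ∀ r : R, β r ∈ M) (t : V ⊗[k] R) : oneT k V R β t ∈ Vsub k V * M := by
  induction t with
  | zero => simp
  | tmul v r =>
      rw [oneT_tmul]
      exact Submodule.mul_mem_mul ⟨v, rfl⟩ (hβ r)
  | add x y hx hy => rw [map_add]; exact add_mem hx hy

lemma tOne_mem (β : R →ₗ[k] TensorAlgebra k V) (M : Submodule k (TensorAlgebra k V))
    (hβ : ∀ r : R, β r ∈ M) (u : R ⊗[k] V) : tOne k V R β u ∈ M * Vsub k V := by
  induction u with
  | zero => simp
  | tmul r v =>
      rw [tOne_tmul]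
      exact Submodule.mul_mem_mul (hβ r) ⟨v, rfl⟩
  | add x y hx hy => rw [map_add]; exact add_mem hx hy

end Aux

noncomputable instance instGA : GradedAlgebra (fun i : ℕ => Vsub k V ^ i) :=
  TensorAlgebra.gradedAlgebra

/-- Projection onto the degree-`m` graded piece of the tensor algebra. -/
noncomputable def proj (m : ℕ) (x : TensorAlgebra k V) : TensorAlgebra k V :=
  (DirectSum.decompose (fun i : ℕ => Vsub k V ^ i) x m : TensorAlgebra k V)

lemma proj_add (m : ℕ) (x y : TensorAlgebra k V) :
    proj k V m (x + y) = proj k V m x + proj k V m y := by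
  simp [proj]

lemma proj_sum (m : ℕ) (s : Finset ℕ) (g : ℕ → TensorAlgebra k V) :
    proj k V m (∑ j ∈ s, g j) = ∑ j ∈ s, proj k V m (g j) := by
  classical
  induction s using Finset.induction_on with
  | empty => simp [proj]
  | insert _ _ h ih => rw [Finset.sum_insert h, proj_add, ih, Finset.sum_insert h]

lemma proj_of_mem (m d : ℕ) (x : TensorAlgebra k V) (hx : x ∈ Vsub k V ^ d) :
    proj k V m x = if d = m then x else 0 := by
  by_cases h : d = m
  · subst h
    simp [proj, DirectSum.decompose_of_mem_same _ hx]
  · simp [proj, h, DirectSum.decompose_of_mem_ne _ hx h]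

lemma pow_le_filtr (N d : ℕ) (hd : d ≤ N) : Vsub k V ^ d ≤ filtr k V N := by
  classical
  have key : ∀ (s : Finset ℕ), ∀ j ∈ s,
      (Vsub k V ^ j : Submodule k (TensorAlgebra k V)) ≤ ∑ i ∈ s, Vsub k V ^ i := by
    intro s
    induction s using Finset.induction_on with
    | empty => simp
    | insert _ _ h ih =>
        intro j hj
        rw [Finset.sum_insert h, Submodule.add_eq_sup]
        rcases Finset.mem_insert.mp hj with rfl | hj'
        · exact le_sup_left
        · exact (ih j hj').trans le_sup_right
  exact key _ d (Finset.mem_range.mpr (by omega))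

lemma oneT_mem_ideal (N : ℕ) (R : Submodule k (TensorAlgebra k V))
    (α : ℕ → (R →ₗ[k] TensorAlgebra k V)) (β : R →ₗ[k] TensorAlgebra k V)
    (hβ : ∀ r : R, β r ∈ Psub k V N R α) (t : V ⊗[k] R) :
    oneT k V R β t ∈ idealP k V N R α := by
  induction t with
  | zero => simp
  | tmul v r =>
      rw [oneT_tmul]
      exact Submodule.subset_span ⟨TensorAlgebra.ι k v, 1, β r, hβ r, by rw [mul_one]⟩
  | add x y hx hy => rw [map_add]; exact add_mem hx hy

lemma tOne_mem_ideal (N : ℕ) (R : Submodule k (TensorAlgebra k V))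
    (α : ℕ → (R →ₗ[k] TensorAlgebra k V)) (β : R →ₗ[k] TensorAlgebra k V)
    (hβ : ∀ r : R, β r ∈ Psub k V N R α) (u : R ⊗[k] V) :
    tOne k V R β u ∈ idealP k V N R α := by
  induction u with
  | zero => simp
  | tmul r v =>
      rw [tOne_tmul]
      exact Submodule.subset_span ⟨1, TensorAlgebra.ι k v, β r, hβ r, by rw [one_mul]⟩
  | add x y hx hy => rw [map_add]; exact add_mem hx hy

/-- (First, easy half of the PBW theorem; no Koszulity needed.)
Let `R ⊆ V^{⊗N}` be a space of relations and `α_i : R → V^{⊗(N-i)}` (`1 ≤ i ≤ N`,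
`α_{N+1} = 0`) linear maps defining the deformed relation space
`P = {r + α₁(r) + ⋯ + α_N(r) | r ∈ R}` inside the tensor algebra `T(V)`.  If
`(P) ∩ F^N T(V) = P`, then for every element of `(V ⊗ R) ∩ (R ⊗ V)` — encoded by a pair
`(t, u)` with `t ∈ V ⊗ R`, `u ∈ R ⊗ V` having the same image in `V^{⊗(N+1)} ⊆ T(V)` —
(a) `[𝟙, α₁] = (𝟙 ⊗ α₁)(t) - (α₁ ⊗ 𝟙)(u)` lies in `R`, and
(b) `α_i([𝟙, α₁](x)) = [𝟙, α_{i+1}](x)` for `i = 1, …, N`. -/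
theorem stmt15 [FiniteDimensional k V] (N : ℕ) (hN : 2 ≤ N)
    (R : Submodule k (TensorAlgebra k V)) (hR : R ≤ (Vsub k V) ^ N)
    (α : ℕ → (R →ₗ[k] TensorAlgebra k V))
    (hα : ∀ i, 1 ≤ i → i ≤ N → ∀ r : R, α i r ∈ (Vsub k V) ^ (N - i))
    (hαtop : α (N + 1) = 0)
    (hPBW : idealP k V N R α ⊓ filtr k V N = Psub k V N R α) :
    ∀ (t : V ⊗[k] R) (u : R ⊗[k] V),
      oneT k V R R.subtype t = tOne k V R R.subtype u →
      ∃ hmem : oneT k V R (α 1) t - tOne k V R (α 1) u ∈ R,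
        ∀ i, 1 ≤ i → i ≤ N →
          α i ⟨oneT k V R (α 1) t - tOne k V R (α 1) u, hmem⟩ =
            oneT k V R (α (i + 1)) t - tOne k V R (α (i + 1)) u := by
  classical
  intro t u htu
  set f : ℕ → TensorAlgebra k V :=
    fun j => oneT k V R (α j) t - tOne k V R (α j) u with hfd
  set P : R →ₗ[k] TensorAlgebra k V := R.subtype + ∑ i ∈ Finset.Icc 1 N, α i with hPd
  -- homogeneity of the pieces f j
  have hf : ∀ j, 1 ≤ j → j ≤ N → f j ∈ Vsub k V ^ (N + 1 - j) := by
    intro j h1 h2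
    have e : N + 1 - j = (N - j) + 1 := by omega
    rw [hfd]
    apply sub_mem
    · have := oneT_mem k V R (α j) (Vsub k V ^ (N - j)) (hα j h1 h2) t
      rwa [e, pow_succ', ]
    · have := tOne_mem k V R (α j) (Vsub k V ^ (N - j)) (hα j h1 h2) u
      rwa [e, pow_succ]
  have hftop : f (N + 1) = 0 := by
    rw [hfd]
    simp only [hαtop, oneT_zero, tOne_zero, LinearMap.zero_apply, sub_zero]
  -- the key element y
  have hy : oneT k V R P t - tOne k V R P u = ∑ j ∈ Finset.Icc 1 N, f j := by
    rw [hPd, oneT_add, tOne_add, oneT_sum, tOne_sum, hfd]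
    simp only [LinearMap.add_apply, LinearMap.sum_apply, Finset.sum_sub_distrib]
    rw [htu]
    abel
  have hPmem : ∀ r : R, P r ∈ Psub k V N R α := fun r => ⟨r, rfl⟩
  have hyI : oneT k V R P t - tOne k V R P u ∈ idealP k V N R α :=
    sub_mem (oneT_mem_ideal k V N R α P hPmem t) (tOne_mem_ideal k V N R α P hPmem u)
  have hyF : oneT k V R P t - tOne k V R P u ∈ filtr k V N := by
    rw [hy]
    apply Submodule.sum_mem
    intro j hj
    obtain ⟨hj1, hj2⟩ := Finset.mem_Icc.mp hj
    exact pow_le_filtr k V N (N + 1 - j) (by omega) (hf j hj1 hj2)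
  have hyP : oneT k V R P t - tOne k V R P u ∈ Psub k V N R α := by
    rw [← hPBW]; exact ⟨hyI, hyF⟩
  obtain ⟨r, hr⟩ := hyP
  have E : (r : TensorAlgebra k V) + ∑ i ∈ Finset.Icc 1 N, α i r
      = ∑ j ∈ Finset.Icc 1 N, f j := by
    rw [← hy, ← hr]
    simp [LinearMap.add_apply, LinearMap.sum_apply]
  have hE : ∀ m, proj k V m ↑r + ∑ i ∈ Finset.Icc 1 N, proj k V m (α i r)
      = ∑ j ∈ Finset.Icc 1 N, proj k V m (f j) := by
    intro m
    have h := congrArg (proj k V m) E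
    rwa [proj_add, proj_sum, proj_sum] at h
  -- degree N component: ↑r = f 1
  have hmemEq : (r : TensorAlgebra k V) = f 1 := by
    have h := hE N
    rw [proj_of_mem k V N N _ (hR r.2), if_pos rfl] at h
    rw [Finset.sum_eq_zero (fun i hi => ?_), add_zero] at h
    · rw [h]
      have : ∀ j ∈ Finset.Icc 1 N, proj k V N (f j) = if j = 1 then f j else 0 := by
        intro j hj
        obtain ⟨hj1, hj2⟩ := Finset.mem_Icc.mp hj
        rw [proj_of_mem k V N (N + 1 - j) _ (hf j hj1 hj2)]
        by_cases hc : j = 1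
        · subst hc; rw [if_pos (by omega), if_pos rfl]
        · rw [if_neg (by omega), if_neg hc]
      rw [Finset.sum_congr rfl this, Finset.sum_ite_eq',
        if_pos (Finset.mem_Icc.mpr ⟨le_refl 1, by omega⟩)]
    · obtain ⟨hi1, hi2⟩ := Finset.mem_Icc.mp hi
      rw [proj_of_mem k V N (N - i) _ (hα i hi1 hi2 r), if_neg (by omega)]
  have hmem : oneT k V R (α 1) t - tOne k V R (α 1) u ∈ R := by
    have : f 1 ∈ R := hmemEq ▸ r.2
    rwa [hfd] at this
  refine ⟨hmem, ?_⟩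
  intro i hi1 hi2
  have hrr : (⟨oneT k V R (α 1) t - tOne k V R (α 1) u, hmem⟩ : R) = r := by
    apply Subtype.ext
    simp only [hmemEq, hfd]
  rw [hrr]
  suffices h : α i r = f (i + 1) by rw [h, hfd]
  have h := hE (N - i)
  rw [proj_of_mem k V (N - i) N _ (hR r.2), if_neg (by omega), zero_add] at h
  have h2 : ∀ j ∈ Finset.Icc 1 N, proj k V (N - i) (α j r) = if j = i then α j r else 0 := by
    intro j hj
    obtain ⟨hj1, hj2⟩ := Finset.mem_Icc.mp hj
    rw [proj_of_mem k V (N - i) (N - j) _ (hα j hj1 hj2 r)]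
    by_cases hc : j = i
    · subst hc; rw [if_pos rfl, if_pos rfl]
    · rw [if_neg (by omega), if_neg hc]
  have h3 : ∀ j ∈ Finset.Icc 1 N, proj k V (N - i) (f j) = if j = i + 1 then f j else 0 := by
    intro j hj
    obtain ⟨hj1, hj2⟩ := Finset.mem_Icc.mp hj
    rw [proj_of_mem k V (N - i) (N + 1 - j) _ (hf j hj1 hj2)]
    by_cases hc : j = i + 1
    · subst hc; rw [if_pos (by omega), if_pos rfl]
    · rw [if_neg (by omega), if_neg hc]
  rw [Finset.sum_congr rfl h2, Finset.sum_congr rfl h3, Finset.sum_ite_eq',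
    Finset.sum_ite_eq', if_pos (Finset.mem_Icc.mpr ⟨hi1, hi2⟩)] at h
  by_cases hc : i + 1 ∈ Finset.Icc 1 N
  · rwa [if_pos hc] at h
  · rw [if_neg hc] at h
    have hiN : i = N := by
      simp only [Finset.mem_Icc] at hc; omega
    subst hiN
    rw [h, hftop]

end PBW15
end

section
/- Let $k$ have characteristic zero, $\zeta$ a primitive third root of unity, $\gamma, a_{11}, a_{21}, a_3 \in k$. Set $U = k\langle x, y\rangle/(F, G)$ where $F = y^3 + x^3 + a_{11} x^2 + \frac{\gamma(1 + 2\zeta^2)}{1+\zeta} y^2 + a_{21} x + \frac{\gamma^2 \zeta}{1+\zeta} y + a_3$ and $G = y^2 x + \zeta yxy + \zeta^2 xy^2 + \frac{\gamma\zeta}{1+\zeta} xy - \frac{\gamma\zeta}{1+\zeta} yx$. Then the deformation maps $\alpha_1, \alpha_2, \alpha_3$ determined by the lower-order terms of $F$ and $G$ satisfy the PBW compatibility conditions: $[\mathbf{1}, \alpha_1](w) \in R$, $\alpha_1 \circ [\mathbf{1}, \alpha_1] = [\mathbf{1}, \alpha_2]$, $\alpha_2 \circ [\mathbf{1}, \alpha_1]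 = [\mathbf{1}, \alpha_3]$, and $\alpha_3 \circ [\mathbf{1}, \alpha_1] = 0$ on $(w)$, where $R = \langle y^3 + x^3,\ y^2x + \zeta yxy + \zeta^2 xy^2 \rangle$ and $w = y^3x + \zeta y^2xy + \zeta^2 yxy^2 + xy^3 + x^4$. -/
/-- PBW compatibility for the deformation of the type-E cubic
Artin–Schelter algebra.  With `f, g` the cubic relations and `w = xf + yg = fx + ζ gy`
spanning `(V ⊗ R) ∩ (R ⊗ V)`, the deformation maps `α₁, α₂, α₃` determined by the
lower-order parts of the deformed relations `F, G` satisfy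
`[𝟙, α₁](w) ∈ R`, `α₁ ∘ [𝟙, α₁] = [𝟙, α₂]`, `α₂ ∘ [𝟙, α₁] = [𝟙, α₃]` and
`α₃ ∘ [𝟙, α₁] = 0` on `(w)`.  Here `[𝟙, α](w) = x·α(f) + y·α(g) - α(f)·x - ζ·α(g)·y`,
computed via the two expressions for `w`. -/
theorem stmt18 (k : Type) [Field k] [CharZero k] (ζ : k) (hζ : IsPrimitiveRoot ζ 3)
    (γ a11 a21 a3 : k) :
    let x : FreeAlgebra k (Fin 2) := FreeAlgebra.ι k 0
    let y : FreeAlgebra k (Fin 2) := FreeAlgebra.ι k 1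
    -- the cubic relations
    let f : FreeAlgebra k (Fin 2) := y * y * y + x * x * x
    let g : FreeAlgebra k (Fin 2) := y * y * x + ζ • (y * x * y) + (ζ ^ 2) • (x * y * y)
    -- the lower-order parts of the deformed relations F = f + A1f + A2f + A3f,
    -- G = g + A1g + A2g + A3g, i.e. the values α₁(f), α₂(f), α₃(f), α₁(g), α₂(g), α₃(g)
    let A1f : FreeAlgebra k (Fin 2) :=
      a11 • (x * x) + (γ * (1 + 2 * ζ ^ 2) / (1 + ζ)) • (y * y)
    let A2f : FreeAlgebra k (Fin 2) := a21 • x + (γ ^ 2 * ζ / (1 + ζ)) • y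
    let A3f : FreeAlgebra k (Fin 2) := algebraMap k (FreeAlgebra k (Fin 2)) a3
    let A1g : FreeAlgebra k (Fin 2) :=
      (γ * ζ / (1 + ζ)) • (x * y) - (γ * ζ / (1 + ζ)) • (y * x)
    let A2g : FreeAlgebra k (Fin 2) := 0
    let A3g : FreeAlgebra k (Fin 2) := 0
    -- the PBW compatibility conditions of Theorem 1.1, evaluated on the syzygy w
    ∃ β δ : k,
      (x * A1f + y * A1g - A1f * x - ζ • (A1g * y) = β • f + δ • g) ∧
      (β • A1f + δ • A1g = x * A2f + y * A2g - A2f * x - ζ • (A2g * y)) ∧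
      (β • A2f + δ • A2g = x * A3f + y * A3g - A3f * x - ζ • (A3g * y)) ∧
      β • A3f + δ • A3g = 0 := by
  intro x y f g A1f A2f A3f A1g A2g A3g
  have h3 : ζ ^ 3 = 1 := hζ.pow_eq_one
  have h1 : ζ ≠ 1 := hζ.ne_one (by norm_num)
  have hz0 : ζ ≠ 0 := fun h => by simp [h] at h3
  have hsum : ζ ^ 2 + ζ + 1 = 0 := by
    have hm : (ζ - 1) * (ζ ^ 2 + ζ + 1) = 0 := by linear_combination h3
    rcases mul_eq_zero.mp hm with h | h
    · exact absurd (sub_eq_zero.mp h) h1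
    · exact h
  have hne : (1 : k) + ζ ≠ 0 := by
    intro h
    have : ζ ^ 2 = 0 := by linear_combination hsum - h
    exact hz0 (pow_eq_zero_iff (by norm_num) |>.mp this)
  have hinv : ((1 : k) + ζ)⁻¹ = -ζ :=
    inv_eq_of_mul_eq_one_right (by linear_combination (-1 : k) * hsum)
  refine ⟨0, γ, ?_, ?_, ?_, ?_⟩
  · simp only [f, g, A1f, A1g, mul_add, add_mul, mul_sub, sub_mul, mul_assoc,
      mul_smul_comm, smul_mul_assoc, smul_add, smul_sub, smul_smul, zero_smul,
      div_eq_mul_inv, hinv]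
    match_scalars <;>
      first
        | ring1
        | linear_combination (-γ) * h3
        | linear_combination γ * h3
        | linear_combination (-γ * ζ) * h3
        | linear_combination γ * ζ * h3
        | linear_combination γ * hsum + γ * h3
        | linear_combination γ * hsum - γ * h3
        | linear_combination (-γ) * hsum + γ * h3
        | linear_combination (-γ) * hsum - γ * h3
        | linear_combination 2 * γ * hsum + γ * ζ * h3
        | linear_combination (-2 * γ) * hsum - γ * ζ * h3
        | linear_combination γ * ζ * hsum + γ * h3
        | linear_combination (-γ * ζ) * hsum - γ * h3
        | linear_combination (-γ) * hsum
        | linear_combination (-γ * ζ) * hsum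
        | linear_combination (-γ * ζ ^ 2) * hsum
        | linear_combination γ * hsum
        | linear_combination γ * ζ * hsum
        | linear_combination γ * ζ ^ 2 * hsum
  · simp only [A1f, A1g, A2f, A2g, mul_add, add_mul, mul_sub, sub_mul, mul_assoc,
      mul_smul_comm, smul_mul_assoc, smul_add, smul_sub, smul_smul,
      zero_smul, zero_mul, mul_zero, smul_zero, zero_add, add_zero, sub_zero,
      div_eq_mul_inv, hinv]
    match_scalars <;> ring
  · simp only [A2f, A2g, A3f, A3g, zero_smul, smul_zero, add_zero, zero_add,
      mul_zero, smul_zero, sub_zero]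
    rw [Algebra.commutes]
    simp
  · simp [A3f, A3g]
end

section
/- Let $V$ be a vector space over a field of characteristic zero, $L : \wedge^2 V \to V$ a Lie bracket and $\Phi_{2r} : \wedge^{2r} V \to k$ an alternating form such that $L \otimes \Phi_{2r} \circ (\underline{\pm \mathbf{1}^{2r-1} L}) : \wedge^{2r+3} V \to V$ is the zero map. Then for all $a \geq 0$ and $b \geq 1$, the map $\underline{\mathbf{1}^{2a} L^b} \otimes \Phi_{2r} \circ (\underline{\pm \mathbf{1}^{2r-1} L}) : \wedge^{2(r+a+b)+1} V \to V^{\otimes 2a+b}$ is also zero. -/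
open scoped TensorProduct
open PiTensorProduct

namespace PBW19


variable (k V : Type) [Field k] [CharZero k] [AddCommGroup V] [Module k V]

/-- The pure tensor `x 0 ⊗ ⋯ ⊗ x (n-1)` in `V^{⊗n}`. -/
noncomputable def tpN (n : ℕ) (x : ℕ → V) : ⨂[k]^n V := tprod k fun i : Fin n => x i

/-- The total antisymmetrization `∑_{σ ∈ S_n} sgn σ • x_{σ(0)} ⊗ ⋯ ⊗ x_{σ(n-1)}`,
the image of `x 0 ∧ ⋯ ∧ x (n-1)` under the embedding `∧ⁿ V ⊆ V^{⊗n}`. -/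
noncomputable def asymN (n : ℕ) (x : ℕ → V) : ⨂[k]^n V :=
  ∑ σ : Equiv.Perm (Fin n), (Equiv.Perm.sign σ : ℤ) • tprod k (fun i : Fin n => x (σ i))

/-- The image of `∧ⁿ V` in `V^{⊗n}` under total antisymmetrization. -/
noncomputable def wedgeIm (n : ℕ) : Submodule k (⨂[k]^n V) :=
  Submodule.span k (Set.range (asymN k V n))

/-- `x 0 ∧ ⋯ ∧ x (n-1)` as an element of the subspace `∧ⁿ V ⊆ V^{⊗n}`. -/
noncomputable def wdgN (n : ℕ) (x : ℕ → V) : wedgeIm k V n :=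
  ⟨asymN k V n x, Submodule.subset_span ⟨x, rfl⟩⟩

/-- Permute the first `n` entries of the sequence `x` by `σ`. -/
def permt {n : ℕ} (σ : Equiv.Perm (Fin n)) (x : ℕ → V) : ℕ → V :=
  fun m => if h : m < n then x (σ ⟨m, h⟩) else x m

/-- Remove the `j`-th entry of the sequence `x`. -/
def removeN (j : ℕ) (x : ℕ → V) : ℕ → V := fun m => if m < j then x m else x (m + 1)

/-- Prepend the entry `v` at the front of the sequence `x`. -/
def consT (v : V) (x : ℕ → V) : ℕ → V := fun m => if m = 0 then v else x (m - 1)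

/-- Replace the `p`-th entry of the sequence `x` by `v`. -/
def putAt (p : ℕ) (x : ℕ → V) (v : V) : ℕ → V := fun m => if m = p then v else x m


/-- The map `V^{⊗m} → V^{⊗(m+1)}`, `t ↦ v ⊗ t`. -/
noncomputable def prepend (m : ℕ) (v : V) : ⨂[k]^m V →ₗ[k] ⨂[k]^(m+1) V :=
  (TensorPower.cast k V (Nat.add_comm 1 m)).toLinearMap ∘ₗ
    (TensorPower.mulEquiv (R := k) (M := V) (n := 1) (m := m)).toLinearMap ∘ₗ
      TensorProduct.mk k (⨂[k]^1 V) (⨂[k]^m V) (tprod k fun _ : Fin 1 => v)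

/-- The map `V^{⊗m} → V^{⊗(m+1)}`, `t ↦ t ⊗ v`. -/
noncomputable def append (m : ℕ) (v : V) : ⨂[k]^m V →ₗ[k] ⨂[k]^(m+1) V :=
  (TensorPower.mulEquiv (R := k) (M := V) (n := m) (m := 1)).toLinearMap ∘ₗ
    (TensorProduct.mk k (⨂[k]^m V) (⨂[k]^1 V)).flip (tprod k fun _ : Fin 1 => v)


/-- The map `𝟙^{⊗p} ⊗ L ⊗ 𝟙^{⊗·}` applied to a sequence: `L` is applied to the entries in
positions `p, p+1` and the remaining entries are kept. -/
def insL (L : V →ₗ[k] V →ₗ[k] V) (p : ℕ) (x : ℕ → V) : ℕ → V :=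
  fun n => if n < p then x n else if n = p then L (x p) (x (p + 1)) else x (n + 1)

/-- Given a word `w` in the letters `𝟙⊗𝟙` (false) and `L` (true), apply it to the sequence
`x`, each letter consuming two consecutive entries; a letter `false` contributes the two
entries themselves and a letter `true` contributes `L` of them. -/
def blocksAux (L : V →ₗ[k] V →ₗ[k] V) : List Bool → (ℕ → V) → List V
  | [], _ => []
  | b :: t, x =>
      (if b then [L (x 0) (x 1)] else [x 0, x 1]) ++ blocksAux L t (fun n => x (n + 2))

/-- The pure tensor in `V^{⊗n}` whose entries are given by the list `l`. -/
noncomputable def tpOfList (n : ℕ) (l : List V) : ⨂[k]^n V :=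
  tprod k fun i : Fin n => l.getD i 0

/-- The map `𝟙^{2a} L^b : V^{⊗(2a+2b)} → V^{⊗(2a+b)}`, i.e. the sum over all interleavings
of `a` doubled identity factors `𝟙⊗𝟙` and `b` factors `L`, applied to the sequence `x`
(the target tensor power `n` is `2a + b`). -/
noncomputable def unders (L : V →ₗ[k] V →ₗ[k] V) (a b n : ℕ) (x : ℕ → V) : ⨂[k]^n V :=
  ∑ w ∈ Finset.univ.filter
      (fun w : Fin (a + b) → Bool => (Finset.univ.filter (fun t => w t = true)).card = b),
    tpOfList k V n (blocksAux k V L (List.ofFn w) x)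

/-! ### Auxiliary machinery for the proof of Statement 19 -/

/-- Index of the output slot of `blocksAux` corresponding to the `t`-th letter. -/
def slotIdx : List Bool → ℕ → ℕ
  | [], _ => 0
  | _ :: _, 0 => 0
  | c :: tl, (t+1) => (if c then 1 else 2) + slotIdx tl t

lemma blocksAux_congr (L : V →ₗ[k] V →ₗ[k] V) (l : List Bool) (y y' : ℕ → V)
    (h : ∀ m < 2 * l.length, y m = y' m) :
    blocksAux k V L l y = blocksAux k V L l y' := by
  induction l generalizing y y' with
  | nil => rfl
  | cons c tl ih =>
    simp only [blocksAux]
    rw [h 0 (by simp only [List.length_cons]; omega),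
      h 1 (by simp only [List.length_cons]; omega),
      ih _ _ (fun m hm => h (m + 2) (by simp only [List.length_cons] at *; omega))]

lemma blocksAux_length (L : V →ₗ[k] V →ₗ[k] V) (l : List Bool) (y : ℕ → V) :
    (blocksAux k V L l y).length = (l.map fun c => if c then 1 else 2).sum := by
  induction l generalizing y with
  | nil => rfl
  | cons c tl ih => cases c <;> simp [blocksAux, ih] <;> omega

lemma slotIdx_lt (L : V →ₗ[k] V →ₗ[k] V) (l : List Bool) (t : ℕ) (ht : t < l.length)
    (y : ℕ → V) :
    slotIdx l t < (blocksAux k V L l y).length := by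
  induction l generalizing t y with
  | nil => simp at ht
  | cons c tl ih =>
    cases t with
    | zero => cases c <;> simp [slotIdx, blocksAux]
    | succ s =>
      have hs : s < tl.length := by simpa using ht
      have := ih s hs (fun n => y (n + 2))
      cases c <;> simp [slotIdx, blocksAux] <;> omega

lemma blocksAux_set (L : V →ₗ[k] V →ₗ[k] V) (l : List Bool) (t : ℕ) (ht : t < l.length)
    (htrue : l.get ⟨t, ht⟩ = true) (y y' : ℕ → V)
    (hagree : ∀ m < 2 * l.length, m ≠ 2 * t → m ≠ 2 * t + 1 → y m = y' m) :
    blocksAux k V L l y' =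
      (blocksAux k V L l y).set (slotIdx l t) (L (y' (2 * t)) (y' (2 * t + 1))) := by
  induction l generalizing t y y' with
  | nil => simp at ht
  | cons c tl ih =>
    cases t with
    | zero =>
      have hc : c = true := htrue
      subst hc
      have htl : blocksAux k V L tl (fun n => y' (n + 2)) =
          blocksAux k V L tl (fun n => y (n + 2)) := by
        refine blocksAux_congr k V L tl _ _ fun m hm => ?_
        exact (hagree (m + 2) (by simp only [List.length_cons]; omega) (by omega)
          (by omega)).symm
      simp only [blocksAux, slotIdx, if_true, List.cons_append, List.nil_append,
        List.set_cons_zero, htl, Nat.mul_zero]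
    | succ s =>
      have hs : s < tl.length := by simpa using ht
      have h0 : y 0 = y' 0 :=
        hagree 0 (by simp only [List.length_cons]; omega) (by omega) (by omega)
      have h1 : y 1 = y' 1 :=
        hagree 1 (by simp only [List.length_cons]; omega) (by omega) (by omega)
      have htrue' : tl.get ⟨s, hs⟩ = true := htrue
      have ihs := ih s hs htrue' (fun n => y (n + 2)) (fun n => y' (n + 2))
        (fun m hm hm1 hm2 => hagree (m + 2) (by simp only [List.length_cons]; omega)
          (by omega) (by omega))
      beta_reduce at ihs
      rw [congrArg y' (by ring : 2 * s + 2 = 2 * (s + 1)),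
        congrArg y' (by ring : 2 * s + 1 + 2 = 2 * (s + 1) + 1)] at ihs
      cases c
      · simp only [blocksAux, slotIdx, Bool.false_eq_true, if_false, List.cons_append,
          List.nil_append, ihs, h0, h1]
        rw [show (2 : ℕ) + slotIdx tl s = (slotIdx tl s + 1) + 1 by omega]
        simp [List.set_cons_succ]
      · simp only [blocksAux, slotIdx, if_true, List.cons_append, List.nil_append, ihs, h0, h1]
        rw [show (1 : ℕ) + slotIdx tl s = slotIdx tl s + 1 by omega]
        simp [List.set_cons_succ]

lemma tpOfList_set (n : ℕ) (l : List V) (hl : l.length = n) (s : ℕ) (hs : s < n) (v : V) :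
    tpOfList k V n (l.set s v) =
      tprod k (Function.update (fun i : Fin n => l.getD i 0) ⟨s, hs⟩ v) := by
  unfold tpOfList
  congr 1
  funext i
  have hi : (i : ℕ) < l.length := hl ▸ i.isLt
  have hi' : (i : ℕ) < (l.set s v).length := by simpa using hi
  rw [List.getD_eq_getElem _ _ hi', List.getElem_set]
  rcases eq_or_ne i (⟨s, hs⟩ : Fin n) with h | h
  · subst h
    simp
  · have hne : s ≠ (i : ℕ) := by
      intro hc
      exact h (Fin.ext (by simp [hc.symm]))
    rw [if_neg hne, Function.update_of_ne h, List.getD_eq_getElem _ _ hi]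

lemma blocksAux_ofFn_length (L : V →ₗ[k] V →ₗ[k] V) {ab : ℕ} (w : Fin ab → Bool) (b : ℕ)
    (hw : (Finset.univ.filter fun s => w s = true).card = b) (y : ℕ → V) :
    (blocksAux k V L (List.ofFn w) y).length + b = 2 * ab := by
  rw [blocksAux_length, List.map_ofFn, List.sum_ofFn]
  have h2 : ∑ i : Fin ab, (if w i = true then (1 : ℕ) else 0) = b := by
    rw [Finset.sum_boole]
    rw [← hw]
    simp
  have h3 : (∑ i : Fin ab, ((fun c => if c = true then (1 : ℕ) else 2) ∘ w) i)
      + (∑ i : Fin ab, (if w i = true then (1 : ℕ) else 0)) = 2 * ab := by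
    rw [← Finset.sum_add_distrib]
    have hpt : ∀ i : Fin ab, ((fun c => if c = true then (1 : ℕ) else 2) ∘ w) i
        + (if w i = true then (1 : ℕ) else 0) = 2 := by
      intro i
      simp only [Function.comp]
      cases w i <;> rfl
    rw [Finset.sum_congr rfl fun i _ => hpt i]
    simp [mul_comm]
  omega

/-- If every right coset sum of `F` over the image of `Pi` vanishes, the full sum of `F`
vanishes (in characteristic zero). -/
lemma coset_trick {G H : Type} [Group G] [Fintype G] [Group H] [Fintype H] [Nonempty H]
    {T : Type} [AddCommGroup T] [Module k T] (F : G → T) (Pi : H → G)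
    (key : ∀ σ : G, ∑ π : H, F (σ * Pi π) = 0) :
    ∑ σ : G, F σ = 0 := by
  have h2 : ∑ π : H, ∑ σ : G, F (σ * Pi π) = 0 := by
    rw [Finset.sum_comm]
    exact Finset.sum_eq_zero fun σ _ => key σ
  have h1 : ∀ π : H, ∑ σ : G, F (σ * Pi π) = ∑ σ : G, F σ := fun π =>
    Fintype.sum_equiv (Equiv.mulRight (Pi π)) _ _ fun σ => rfl
  simp only [h1] at h2
  rw [Finset.sum_const, Finset.card_univ] at h2
  have h3 : ((Fintype.card H : k)) • (∑ σ : G, F σ) = 0 := by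
    rw [Nat.cast_smul_eq_nsmul]
    exact h2
  rcases smul_eq_zero.mp h3 with h | h
  · exact absurd h (Nat.cast_ne_zero.mpr Fintype.card_ne_zero)
  · exact h

/-- The embedding of the index set `Fin (2r+3)` into `Fin (2(r+a+b)+1)` sending `0, 1` to
the input positions `2t, 2t+1` of the chosen `L`-block and `i+2` to `2a+2b+i`. -/
def embE (r a b : ℕ) (t : Fin (a + b)) : Fin (2 * r + 3) → Fin (2 * (r + a + b) + 1) :=
  fun i =>
    ⟨if (i : ℕ) = 0 then 2 * (t : ℕ) else if (i : ℕ) = 1 then 2 * (t : ℕ) + 1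
        else 2 * a + 2 * b + ((i : ℕ) - 2), by
      have hi := i.isLt
      have htl := t.isLt
      split_ifs <;> omega⟩

lemma embE_val (r a b : ℕ) (t : Fin (a + b)) (i : Fin (2 * r + 3)) :
    ((embE r a b t i : Fin (2 * (r + a + b) + 1)) : ℕ) =
      if (i : ℕ) = 0 then 2 * (t : ℕ) else if (i : ℕ) = 1 then 2 * (t : ℕ) + 1
        else 2 * a + 2 * b + ((i : ℕ) - 2) := rfl

lemma embE_inj (r a b : ℕ) (t : Fin (a + b)) : Function.Injective (embE r a b t) := by
  intro i j hij
  have hi := i.isLt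
  have hj := j.isLt
  have hv := congrArg Fin.val hij
  rw [embE_val, embE_val] at hv
  apply Fin.ext
  split_ifs at hv <;> omega

lemma inner_vanish (r a b : ℕ) (L : V →ₗ[k] V →ₗ[k] V)
    (Φ : AlternatingMap k V k (Fin (2 * r)))
    (hvanish : ∀ x : ℕ → V,
      (∑ σ : Equiv.Perm (Fin (2 * r + 3)), (Equiv.Perm.sign σ : ℤ) •
          ∑ pos ∈ Finset.range (2 * r),
            ((-1 : k) ^ (2 * r - 1 - pos) *
                Φ (fun i : Fin (2 * r) =>
                  insL k V L pos (fun n => permt V σ x (n + 2)) i)) •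
              L (permt V σ x 0) (permt V σ x 1)) = 0)
    (x : ℕ → V) (w : Fin (a + b) → Bool) (t : Fin (a + b)) (htw : w t = true)
    (hcard : (Finset.univ.filter fun s => w s = true).card = b) :
    ∑ σ : Equiv.Perm (Fin (2 * (r + a + b) + 1)), ((Equiv.Perm.sign σ : ℤ) : k) •
        ((∑ pos ∈ Finset.range (2 * r),
            ((-1 : k) ^ (2 * r - 1 - pos) *
              Φ (fun i : Fin (2 * r) =>
                insL k V L pos (fun n => permt V σ x (2 * a + 2 * b + n)) i))) •
          tpOfList k V (2 * a + b) (blocksAux k V L (List.ofFn w) (permt V σ x))) = 0 := by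
  classical
  set e := embE r a b t with he_def
  set Pi : Equiv.Perm (Fin (2 * r + 3)) → Equiv.Perm (Fin (2 * (r + a + b) + 1)) :=
    fun π => π.extendDomain (Equiv.ofInjective e (embE_inj r a b t)) with hPi_def
  have hPie : ∀ (π : Equiv.Perm (Fin (2 * r + 3))) (i : Fin (2 * r + 3)),
      Pi π (e i) = e (π i) := by
    intro π i
    have h := Equiv.Perm.extendDomain_apply_image π (Equiv.ofInjective e (embE_inj r a b t)) i
    simpa [hPi_def, Equiv.ofInjective] using h
  have hPifix : ∀ (π : Equiv.Perm (Fin (2 * r + 3))) (m : Fin (2 * (r + a + b) + 1)),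
      m ∉ Set.range e → Pi π m = m :=
    fun π m hm => Equiv.Perm.extendDomain_apply_not_subtype π _ hm
  have hsgn : ∀ π : Equiv.Perm (Fin (2 * r + 3)),
      Equiv.Perm.sign (Pi π) = Equiv.Perm.sign π :=
    fun π => Equiv.Perm.sign_extendDomain π _
  refine coset_trick k _ Pi fun σ => ?_
  -- basic data for the chosen block
  have hlt : (t : ℕ) < (List.ofFn w).length := by simpa using t.isLt
  have hget : (List.ofFn w).get ⟨(t : ℕ), hlt⟩ = true := by
    rw [List.get_ofFn]
    convert htw using 2
    rfl
  have hlen : (blocksAux k V L (List.ofFn w) (permt V σ x)).length = 2 * a + b := by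
    have h := blocksAux_ofFn_length k V L w b hcard (permt V σ x)
    omega
  have hs : slotIdx (List.ofFn w) (t : ℕ) < 2 * a + b :=
    hlen ▸ slotIdx_lt k V L (List.ofFn w) (t : ℕ) hlt (permt V σ x)
  set y : ℕ → V := fun m => if h : m < 2 * r + 3 then x (σ (e ⟨m, h⟩)) else 0 with hy
  have hEntry : ∀ (π : Equiv.Perm (Fin (2 * r + 3))) (n : ℕ) (hn : n < 2 * r + 3),
      permt V (σ * Pi π) x ((e ⟨n, hn⟩ : Fin (2 * (r + a + b) + 1)) : ℕ) =
        permt V π y n := by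
    intro π n hn
    simp only [permt, hy]
    rw [dif_pos (e ⟨n, hn⟩).isLt, dif_pos hn, dif_pos (π ⟨n, hn⟩).isLt]
    rw [Fin.eta, Fin.eta, Equiv.Perm.mul_apply, hPie]
  have hY : ∀ (π : Equiv.Perm (Fin (2 * r + 3))) (n : ℕ), n ≤ 2 * r →
      permt V (σ * Pi π) x (2 * a + 2 * b + n) = permt V π y (n + 2) := by
    intro π n hn
    have hn2 : n + 2 < 2 * r + 3 := by omega
    have h := hEntry π (n + 2) hn2
    rwa [show ((e ⟨n + 2, hn2⟩ : Fin (2 * (r + a + b) + 1)) : ℕ) = 2 * a + 2 * b + n from by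
      show (if n + 2 = 0 then 2 * (t : ℕ) else if n + 2 = 1 then 2 * (t : ℕ) + 1
        else 2 * a + 2 * b + (n + 2 - 2)) = 2 * a + 2 * b + n
      rw [if_neg (by omega : ¬(n + 2 = 0)), if_neg (by omega : ¬(n + 2 = 1))]
      omega] at h
  have h0lt : (0 : ℕ) < 2 * r + 3 := by omega
  have h1lt : (1 : ℕ) < 2 * r + 3 := by omega
  have hv0 : ∀ π : Equiv.Perm (Fin (2 * r + 3)),
      permt V (σ * Pi π) x (2 * (t : ℕ)) = permt V π y 0 := by
    intro π
    have h := hEntry π 0 h0lt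
    rwa [show ((e ⟨0, h0lt⟩ : Fin (2 * (r + a + b) + 1)) : ℕ) = 2 * (t : ℕ) from rfl] at h
  have hv1 : ∀ π : Equiv.Perm (Fin (2 * r + 3)),
      permt V (σ * Pi π) x (2 * (t : ℕ) + 1) = permt V π y 1 := by
    intro π
    have h := hEntry π 1 h1lt
    rwa [show ((e ⟨1, h1lt⟩ : Fin (2 * (r + a + b) + 1)) : ℕ) = 2 * (t : ℕ) + 1 from rfl] at h
  have hagree : ∀ π : Equiv.Perm (Fin (2 * r + 3)), ∀ m < 2 * (List.ofFn w).length,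
      m ≠ 2 * (t : ℕ) → m ≠ 2 * (t : ℕ) + 1 →
      permt V σ x m = permt V (σ * Pi π) x m := by
    intro π m hm h1 h2
    have hmlen : m < 2 * (a + b) := by simpa using hm
    have hmN : m < 2 * (r + a + b) + 1 := by omega
    have hnr : (⟨m, hmN⟩ : Fin (2 * (r + a + b) + 1)) ∉ Set.range e := by
      rintro ⟨i, hi⟩
      have hilt := i.isLt
      have hiv : ((e i : Fin (2 * (r + a + b) + 1)) : ℕ) = m := by rw [hi]
      rw [he_def, embE_val] at hiv
      split_ifs at hiv <;> omega
    simp only [permt]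
    rw [dif_pos hmN, dif_pos hmN, Equiv.Perm.mul_apply, hPifix π _ hnr]
  have hT : ∀ π : Equiv.Perm (Fin (2 * r + 3)),
      blocksAux k V L (List.ofFn w) (permt V (σ * Pi π) x) =
      (blocksAux k V L (List.ofFn w) (permt V σ x)).set (slotIdx (List.ofFn w) (t : ℕ))
        (L (permt V π y 0) (permt V π y 1)) := by
    intro π
    rw [blocksAux_set k V L (List.ofFn w) (t : ℕ) hlt hget (permt V σ x)
      (permt V (σ * Pi π) x) (hagree π), hv0 π, hv1 π]
  have hA : ∀ π : Equiv.Perm (Fin (2 * r + 3)),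
      (∑ pos ∈ Finset.range (2 * r),
        ((-1 : k) ^ (2 * r - 1 - pos) *
          Φ (fun i : Fin (2 * r) =>
            insL k V L pos (fun n => permt V (σ * Pi π) x (2 * a + 2 * b + n)) i))) =
      (∑ pos ∈ Finset.range (2 * r),
        ((-1 : k) ^ (2 * r - 1 - pos) *
          Φ (fun i : Fin (2 * r) =>
            insL k V L pos (fun n => permt V π y (n + 2)) i))) := by
    intro π
    refine Finset.sum_congr rfl fun pos hpos => ?_
    have hpos' : pos < 2 * r := Finset.mem_range.mp hpos
    congr 2
    funext i
    have hi := i.isLt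
    simp only [insL]
    split_ifs with hc1 hc2
    · exact hY π i (by omega)
    · rw [hY π pos (by omega), hY π (pos + 1) (by omega)]
    · exact hY π ((i : ℕ) + 1) (by omega)
  have hmid : ∀ π : Equiv.Perm (Fin (2 * r + 3)),
      ((Equiv.Perm.sign (σ * Pi π) : ℤ) : k) •
        ((∑ pos ∈ Finset.range (2 * r),
            ((-1 : k) ^ (2 * r - 1 - pos) *
              Φ (fun i : Fin (2 * r) =>
                insL k V L pos (fun n => permt V (σ * Pi π) x (2 * a + 2 * b + n)) i))) •
          tpOfList k V (2 * a + b) (blocksAux k V L (List.ofFn w) (permt V (σ * Pi π) x)))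
      = ((Equiv.Perm.sign σ : ℤ) : k) •
          tprod k (Function.update
            (fun i : Fin (2 * a + b) =>
              (blocksAux k V L (List.ofFn w) (permt V σ x)).getD i 0)
            ⟨slotIdx (List.ofFn w) (t : ℕ), hs⟩
            (((Equiv.Perm.sign π : ℤ) : k) •
              ((∑ pos ∈ Finset.range (2 * r),
                  ((-1 : k) ^ (2 * r - 1 - pos) *
                    Φ (fun i : Fin (2 * r) =>
                      insL k V L pos (fun n => permt V π y (n + 2)) i))) •
                L (permt V π y 0) (permt V π y 1)))) := by
    intro π
    rw [hA π, hT π, tpOfList_set k V (2 * a + b) _ hlen _ hs _,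
      show (Equiv.Perm.sign (σ * Pi π) : ℤ)
          = (Equiv.Perm.sign σ : ℤ) * (Equiv.Perm.sign π : ℤ) from by
        rw [Equiv.Perm.sign_mul, hsgn π]
        exact Units.val_mul _ _,
      Int.cast_mul, mul_smul,
      ← MultilinearMap.map_update_smul, ← MultilinearMap.map_update_smul]
  simp only [hmid]
  rw [← Finset.smul_sum, ← MultilinearMap.map_update_sum]
  have hzero : (∑ π : Equiv.Perm (Fin (2 * r + 3)),
      ((Equiv.Perm.sign π : ℤ) : k) •
        ((∑ pos ∈ Finset.range (2 * r),
            ((-1 : k) ^ (2 * r - 1 - pos) *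
              Φ (fun i : Fin (2 * r) =>
                insL k V L pos (fun n => permt V π y (n + 2)) i))) •
          L (permt V π y 0) (permt V π y 1))) = 0 := by
    have h := hvanish y
    have hrw : ∀ π : Equiv.Perm (Fin (2 * r + 3)),
        ((Equiv.Perm.sign π : ℤ) : k) •
          ((∑ pos ∈ Finset.range (2 * r),
              ((-1 : k) ^ (2 * r - 1 - pos) *
                Φ (fun i : Fin (2 * r) =>
                  insL k V L pos (fun n => permt V π y (n + 2)) i))) •
            L (permt V π y 0) (permt V π y 1))
        = (Equiv.Perm.sign π : ℤ) •
            ∑ pos ∈ Finset.range (2 * r),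
              ((-1 : k) ^ (2 * r - 1 - pos) *
                Φ (fun i : Fin (2 * r) =>
                  insL k V L pos (fun n => permt V π y (n + 2)) i)) •
                L (permt V π y 0) (permt V π y 1) := by
      intro π
      rw [Finset.sum_smul, Int.cast_smul_eq_zsmul]
    simp only [hrw]
    exact h
  rw [hzero, MultilinearMap.map_update_zero, smul_zero]

/-- Let `V` be a vector space over a field of characteristic zero,
`L : ∧² V → V` a Lie bracket and `Φ : ∧^{2r} V → k` an alternating form such that
`L ⊗ (Φ ∘ (± 𝟙^{2r-1} L)) : ∧^{2r+3} V → V` is the zero map.  Then for all `a ≥ 0` and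
`b ≥ 1` the map
`𝟙^{2a} L^b ⊗ (Φ ∘ (± 𝟙^{2r-1} L)) : ∧^{2(r+a+b)+1} V → V^{⊗(2a+b)}` is also zero.
(All maps are evaluated on exterior powers embedded by total antisymmetrization;
`± 𝟙^{2r-1} L = ∑_{j=0}^{2r-1} (-1)^j 𝟙^{⊗(2r-1-j)} ⊗ L ⊗ 𝟙^{⊗j}`.) -/
theorem stmt19 (r a b : ℕ) (hb : 1 ≤ b)
    (L : V →ₗ[k] V →ₗ[k] V) (hL : ∀ v : V, L v v = 0)
    (hJac : ∀ x : Fin 3 → V,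
      (∑ σ : Equiv.Perm (Fin 3), (Equiv.Perm.sign σ : ℤ) •
          (L (x (σ 0)) (L (x (σ 1)) (x (σ 2))) - L (L (x (σ 0)) (x (σ 1))) (x (σ 2)))) = 0)
    (Φ : AlternatingMap k V k (Fin (2 * r)))
    (hvanish : ∀ x : ℕ → V,
      (∑ σ : Equiv.Perm (Fin (2 * r + 3)), (Equiv.Perm.sign σ : ℤ) •
          ∑ pos ∈ Finset.range (2 * r),
            ((-1 : k) ^ (2 * r - 1 - pos) *
                Φ (fun i : Fin (2 * r) =>
                  insL k V L pos (fun n => permt V σ x (n + 2)) i)) •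
              L (permt V σ x 0) (permt V σ x 1)) = 0) :
    ∀ x : ℕ → V,
      (∑ σ : Equiv.Perm (Fin (2 * (r + a + b) + 1)), (Equiv.Perm.sign σ : ℤ) •
          ∑ pos ∈ Finset.range (2 * r),
            ((-1 : k) ^ (2 * r - 1 - pos) *
                Φ (fun i : Fin (2 * r) =>
                  insL k V L pos (fun n => permt V σ x (2 * a + 2 * b + n)) i)) •
              unders k V L a b (2 * a + b) (permt V σ x)) = 0 := by
  intro x
  classical
  have hrw : ∀ σ : Equiv.Perm (Fin (2 * (r + a + b) + 1)),
      (Equiv.Perm.sign σ : ℤ) •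
          ∑ pos ∈ Finset.range (2 * r),
            ((-1 : k) ^ (2 * r - 1 - pos) *
                Φ (fun i : Fin (2 * r) =>
                  insL k V L pos (fun n => permt V σ x (2 * a + 2 * b + n)) i)) •
              unders k V L a b (2 * a + b) (permt V σ x)
      = ∑ w ∈ Finset.univ.filter
            (fun w : Fin (a + b) → Bool =>
              (Finset.univ.filter (fun t => w t = true)).card = b),
          ((Equiv.Perm.sign σ : ℤ) : k) •
            ((∑ pos ∈ Finset.range (2 * r),
                ((-1 : k) ^ (2 * r - 1 - pos) *
                  Φ (fun i : Fin (2 * r) =>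
                    insL k V L pos (fun n => permt V σ x (2 * a + 2 * b + n)) i))) •
              tpOfList k V (2 * a + b) (blocksAux k V L (List.ofFn w) (permt V σ x))) := by
    intro σ
    rw [← Int.cast_smul_eq_zsmul k, ← Finset.sum_smul]
    unfold unders
    rw [Finset.smul_sum, Finset.smul_sum]
  simp only [hrw]
  rw [Finset.sum_comm]
  refine Finset.sum_eq_zero fun w hw => ?_
  have hcard := (Finset.mem_filter.mp hw).2
  have hpos : 0 < (Finset.univ.filter fun t => w t = true).card := by omega
  obtain ⟨t, htmem⟩ := Finset.card_pos.mp hpos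
  exact inner_vanish k V r a b L Φ hvanish x w t (Finset.mem_filter.mp htmem).2 hcard

end PBW19
end
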